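/- arXiv:1210.6383 — 3 statements merged into one kernel-verified Lean document; each statement's English description precedes it below -/
import Mathlib

section
/- (Paley–Wiener stability) Let S ⊆ ℝ be a bounded measurable set of positive measure and Λ = {λ_n} ⊂ ℝ such that E(Λ) is a Riesz basis of L²(S). Then there exists η = η(S, Λ) > 0 such that for every sequence Γ = {γ_n} ⊂ ℝ with |λ_n − γ_n| < η for all n, the system E(Γ) is also a Riesz basis of L²(S). -/
open MeasureTheory Complex
open scoped Real

/-- The exponential `e_λ(t) = e^{2πiλt}`. -/
noncomputable def expF (l t : ℝ) : ℂ := Complex.exp (2 * π * Complex.I * l * t)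

/-- `E(Λ)` (indexed by ℕ) is a Riesz basis of `L²(S)`: it is complete and satisfies
two-sided ℓ²-synthesis bounds on finitely supported coefficient sequences. -/
def IsExpRieszBasisSeq (S : Set ℝ) (Λ : ℕ → ℝ) : Prop :=
  (∀ f : ℝ → ℂ, MemLp f 2 (volume.restrict S) →
      (∀ n : ℕ, ∫ t in S, f t * Complex.exp (-(2 * π * Complex.I * (Λ n) * t)) = 0) →
      ∀ᵐ t ∂(volume.restrict S), f t = 0) ∧
  ∃ c C : ℝ, 0 < c ∧ 0 < C ∧ ∀ a : ℕ →₀ ℂ,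
    c * ∑ n ∈ a.support, ‖a n‖ ^ 2 ≤
        ∫ t in S, ‖∑ n ∈ a.support, a n * expF (Λ n) t‖ ^ 2 ∧
    (∫ t in S, ‖∑ n ∈ a.support, a n * expF (Λ n) t‖ ^ 2) ≤
        C * ∑ n ∈ a.support, ‖a n‖ ^ 2

open scoped ENNReal

lemma expF_norm (l t : ℝ) : ‖expF l t‖ = 1 := by
  rw [expF, Complex.norm_exp]
  have : (2 * ↑π * Complex.I * ↑l * ↑t).re = 0 := by
    simp [Complex.mul_re, Complex.mul_im]
  rw [this, Real.exp_zero]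

lemma expF_continuous (l : ℝ) : Continuous (expF l) := by
  unfold expF
  fun_prop

/-- membership in L² of continuous functions bounded on S -/
lemma memL2_of_bound {S : Set ℝ} (hSm : MeasurableSet S)
    [IsFiniteMeasure (volume.restrict S)]
    {f : ℝ → ℂ} (hf : Continuous f) (M : ℝ) (hM : ∀ t ∈ S, ‖f t‖ ≤ M) :
    MemLp f 2 (volume.restrict S) := by
  refine MemLp.of_bound hf.aestronglyMeasurable M ?_
  filter_upwards [ae_restrict_mem hSm] with t ht using hM t ht

lemma memL2_expF {S : Set ℝ} (hSm : MeasurableSet S)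
    [IsFiniteMeasure (volume.restrict S)] (l : ℝ) :
    MemLp (expF l) 2 (volume.restrict S) :=
  memL2_of_bound hSm (expF_continuous l) 1 (fun t _ => (expF_norm l t).le)

/-- ‖g‖² = ∫ ‖g t‖² for g in L² -/
lemma norm_sq_L2 {α : Type*} [MeasurableSpace α] {μ : Measure α} (g : Lp ℂ 2 μ) :
    ‖g‖ ^ 2 = ∫ t, ‖g t‖ ^ 2 ∂μ := by
  rw [@norm_sq_eq_re_inner ℂ, L2.inner_def, ← integral_re (L2.integrable_inner g g)]
  refine integral_congr_ae (Filter.Eventually.of_forall fun t => ?_)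
  show RCLike.re (inner ℂ (g t) (g t)) = ‖g t‖ ^ 2
  have : (inner ℂ (g t) (g t)) = ((‖g t‖ : ℝ) ^ 2 : ℝ) := by
    rw [RCLike.inner_apply', RCLike.conj_mul]
    norm_cast
  rw [this]
  norm_cast

lemma coeFn_sum_smul_toLp {α : Type*} [MeasurableSpace α] {μ : Measure α}
    (F : Finset ℕ) (b : ℕ → ℂ) (f : ℕ → α → ℂ) (hf : ∀ n, MemLp (f n) 2 μ) :
    (((∑ n ∈ F, b n • ((hf n).toLp (f n))) : Lp ℂ 2 μ) : α → ℂ)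
      =ᵐ[μ] fun t => ∑ n ∈ F, b n * f n t := by
  induction F using Finset.induction_on with
  | empty => simp only [Finset.sum_empty]; exact Lp.coeFn_zero ℂ 2 μ
  | insert n s hn ih =>
    rw [Finset.sum_insert hn]
    filter_upwards [Lp.coeFn_add (b n • ((hf n).toLp (f n))) (∑ m ∈ s, b m • ((hf m).toLp (f m))),
      Lp.coeFn_smul (b n) ((hf n).toLp (f n)), (hf n).coeFn_toLp, ih] with t h1 h2 h3 h4
    simp only [h1, Pi.add_apply, h2, Pi.smul_apply, h3, h4, Finset.sum_insert hn,
      smul_eq_mul]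

/-- The integral in the statement equals the squared L² norm. -/
lemma integral_eq_norm_sq {S : Set ℝ} (hSm : MeasurableSet S)
    [IsFiniteMeasure (volume.restrict S)]
    (F : Finset ℕ) (b : ℕ → ℂ) (l : ℕ → ℝ) :
    ∫ t in S, ‖∑ n ∈ F, b n * expF (l n) t‖ ^ 2
      = ‖∑ n ∈ F, b n • ((memL2_expF hSm (l n)).toLp (expF (l n)))‖ ^ 2 := by
  rw [norm_sq_L2]
  refine integral_congr_ae ?_ |>.symm
  filter_upwards [coeFn_sum_smul_toLp F b (fun n => expF (l n))
    (fun n => memL2_expF hSm (l n))] with t h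
  rw [h]

/-- transfer Finsupp-indexed bounds to arbitrary finset/coefficient bounds -/
lemma bounds_transfer {S : Set ℝ} {Λ : ℕ → ℝ} {c C : ℝ}
    (hb : ∀ a : ℕ →₀ ℂ,
      c * ∑ n ∈ a.support, ‖a n‖ ^ 2 ≤
        ∫ t in S, ‖∑ n ∈ a.support, a n * expF (Λ n) t‖ ^ 2 ∧
      (∫ t in S, ‖∑ n ∈ a.support, a n * expF (Λ n) t‖ ^ 2) ≤
        C * ∑ n ∈ a.support, ‖a n‖ ^ 2)
    (F : Finset ℕ) (b : ℕ → ℂ) :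
    c * ∑ n ∈ F, ‖b n‖ ^ 2 ≤
        ∫ t in S, ‖∑ n ∈ F, b n * expF (Λ n) t‖ ^ 2 ∧
    (∫ t in S, ‖∑ n ∈ F, b n * expF (Λ n) t‖ ^ 2) ≤
        C * ∑ n ∈ F, ‖b n‖ ^ 2 := by
  classical
  set b' : ℕ → ℂ := fun n => if n ∈ F then b n else 0 with hb'
  have hsupp : ∀ n, b' n ≠ 0 → n ∈ F := by
    intro n h
    by_contra hn
    exact h (by simp [hb', hn])
  set a : ℕ →₀ ℂ := Finsupp.onFinset F b' hsupp with ha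
  have hsub : a.support ⊆ F := Finsupp.support_onFinset_subset
  have hcoeff : ∑ n ∈ a.support, ‖a n‖ ^ 2 = ∑ n ∈ F, ‖b n‖ ^ 2 := by
    rw [Finset.sum_subset hsub]
    · refine Finset.sum_congr rfl fun n hn => ?_
      simp [ha, Finsupp.onFinset_apply, hb', hn]
    · intro n _ hn
      rw [Finsupp.notMem_support_iff.mp hn]
      simp
  have hfun : ∀ t, ∑ n ∈ a.support, a n * expF (Λ n) t = ∑ n ∈ F, b n * expF (Λ n) t := by
    intro t
    rw [Finset.sum_subset hsub]
    · refine Finset.sum_congr rfl fun n hn => ?_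
      simp [ha, Finsupp.onFinset_apply, hb', hn]
    · intro n _ hn
      rw [Finsupp.notMem_support_iff.mp hn, zero_mul]
  have hint : (∫ t in S, ‖∑ n ∈ a.support, a n * expF (Λ n) t‖ ^ 2)
      = ∫ t in S, ‖∑ n ∈ F, b n * expF (Λ n) t‖ ^ 2 := by
    congr 1
    ext t
    rw [hfun t]
  obtain ⟨h1, h2⟩ := hb a
  rw [hcoeff, hint] at h1 h2
  exact ⟨h1, h2⟩

section Norms

variable {S : Set ℝ} (hSm : MeasurableSet S) [IsFiniteMeasure (volume.restrict S)]
  {Λ : ℕ → ℝ} {c C : ℝ}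

lemma norm_upper (hC : 0 ≤ C)
    (hb : ∀ F : Finset ℕ, ∀ b : ℕ → ℂ,
      (∫ t in S, ‖∑ n ∈ F, b n * expF (Λ n) t‖ ^ 2) ≤ C * ∑ n ∈ F, ‖b n‖ ^ 2)
    (F : Finset ℕ) (b : ℕ → ℂ) :
    ‖∑ n ∈ F, b n • ((memL2_expF hSm (Λ n)).toLp (expF (Λ n)))‖
      ≤ Real.sqrt C * Real.sqrt (∑ n ∈ F, ‖b n‖ ^ 2) := by
  have h := hb F b
  rw [integral_eq_norm_sq hSm F b Λ] at h
  have := Real.sqrt_le_sqrt h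
  rwa [Real.sqrt_sq (norm_nonneg _), Real.sqrt_mul hC] at this

lemma norm_lower (hc : 0 ≤ c)
    (hb : ∀ F : Finset ℕ, ∀ b : ℕ → ℂ,
      c * ∑ n ∈ F, ‖b n‖ ^ 2 ≤ ∫ t in S, ‖∑ n ∈ F, b n * expF (Λ n) t‖ ^ 2)
    (F : Finset ℕ) (b : ℕ → ℂ) :
    Real.sqrt c * Real.sqrt (∑ n ∈ F, ‖b n‖ ^ 2)
      ≤ ‖∑ n ∈ F, b n • ((memL2_expF hSm (Λ n)).toLp (expF (Λ n)))‖ := by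
  have h := hb F b
  rw [integral_eq_norm_sq hSm F b Λ] at h
  have := Real.sqrt_le_sqrt h
  rwa [Real.sqrt_sq (norm_nonneg _), Real.sqrt_mul hc] at this

end Norms

lemma norm_div_factorial (x : ℂ) (k : ℕ) :
    ‖x ^ k / (k.factorial : ℂ)‖ = ‖x‖ ^ k / (k.factorial : ℝ) := by
  rw [norm_div, norm_pow]
  norm_num

lemma summable_pow_div_factorial_complex (x : ℂ) :
    Summable fun k : ℕ => x ^ k / (k.factorial : ℂ) := by
  refine Summable.of_norm ?_
  simp only [norm_div_factorial]
  exact Real.summable_pow_div_factorial ‖x‖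

lemma complex_exp_eq_tsum (x : ℂ) :
    Complex.exp x = ∑' k : ℕ, x ^ k / (k.factorial : ℂ) := by
  rw [Complex.exp_eq_exp_ℂ, NormedSpace.exp_eq_tsum_div]

lemma real_exp_eq_tsum (x : ℝ) :
    Real.exp x = ∑' k : ℕ, x ^ k / (k.factorial : ℝ) := by
  rw [Real.exp_eq_exp_ℝ, NormedSpace.exp_eq_tsum_div]

set_option maxHeartbeats 1000000 in
/-- Tail bound for the complex exponential series. -/
lemma exp_tail_bound {x : ℂ} {M : ℝ} (hx : ‖x‖ ≤ M) (m : ℕ) :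
    ‖Complex.exp x - ∑ k ∈ Finset.range m, x ^ k / (k.factorial : ℂ)‖
      ≤ Real.exp M - ∑ k ∈ Finset.range m, M ^ k / (k.factorial : ℝ) := by
  have hM : 0 ≤ M := le_trans (norm_nonneg x) hx
  have hsC := summable_pow_div_factorial_complex x
  have hsR := Real.summable_pow_div_factorial M
  have hC := Summable.sum_add_tsum_nat_add (f := fun k => x ^ k / (k.factorial : ℂ)) m hsC
  have hR := Summable.sum_add_tsum_nat_add (f := fun k => M ^ k / (k.factorial : ℝ)) m hsR
  rw [complex_exp_eq_tsum, ← hC, add_sub_cancel_left]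
  rw [real_exp_eq_tsum, ← hR, add_sub_cancel_left]
  have hs1 : Summable (fun k : ℕ => ‖x‖ ^ (k + m) / (((k + m).factorial : ℝ))) :=
    (summable_nat_add_iff m).mpr (Real.summable_pow_div_factorial ‖x‖)
  have hs1' : Summable (fun k : ℕ => ‖x ^ (k + m) / (((k + m).factorial : ℂ))‖) :=
    hs1.congr (fun k => (norm_div_factorial x (k + m)).symm)
  have hs2 : Summable (fun k : ℕ => M ^ (k + m) / (((k + m).factorial : ℝ))) :=
    (summable_nat_add_iff m).mpr hsR
  calc ‖∑' k : ℕ, x ^ (k + m) / ((k + m).factorial : ℂ)‖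
      ≤ ∑' k : ℕ, ‖x ^ (k + m) / ((k + m).factorial : ℂ)‖ := norm_tsum_le_tsum_norm hs1'
    _ ≤ ∑' k : ℕ, M ^ (k + m) / ((k + m).factorial : ℝ) := by
        refine Summable.tsum_le_tsum (fun k => ?_) hs1' hs2
        rw [norm_div_factorial]
        gcongr <;> first | exact norm_nonneg x | exact hx

lemma norm_two_pi_I_mul (r : ℝ) : ‖2 * ↑π * Complex.I * (r : ℂ)‖ = 2 * π * |r| := by
  simp only [norm_mul, Complex.norm_I, Complex.norm_two, Complex.norm_real, Real.norm_eq_abs]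
  rw [abs_of_pos Real.pi_pos]
  ring

lemma exp_partial_le (M : ℝ) (hM : 0 ≤ M) (m : ℕ) :
    ∑ k ∈ Finset.range m, M ^ k / (k.factorial : ℝ) ≤ Real.exp M := by
  rw [real_exp_eq_tsum]
  exact Summable.sum_le_tsum _ (fun k _ => by positivity) (Real.summable_pow_div_factorial M)

lemma exp_tail_tendsto (M : ℝ) :
    Filter.Tendsto (fun m => Real.exp M - ∑ k ∈ Finset.range m, M ^ k / (k.factorial : ℝ))
      Filter.atTop (nhds 0) := by
  have h := ((Real.summable_pow_div_factorial M).hasSum).tendsto_sum_nat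
  rw [← real_exp_eq_tsum] at h
  simpa using (Filter.Tendsto.const_sub (Real.exp M) h)

noncomputable def EE {S : Set ℝ} (hSm : MeasurableSet S) [IsFiniteMeasure (volume.restrict S)]
    (l : ℝ) : Lp ℂ 2 (volume.restrict S) := (memL2_expF hSm l).toLp (expF l)

section Perturb

variable {S : Set ℝ} (hSm : MeasurableSet S) [IsFiniteMeasure (volume.restrict S)]
  {Λ Γ : ℕ → ℝ} {η R C : ℝ}

/-- The function `h_p(t) = ∑_n (b_n δ_n^p) e_{Λ_n}(t)` -/
lemma hk_norm_bound (hC : 0 ≤ C) (hη0 : 0 ≤ η) (hη : ∀ n, |Γ n - Λ n| ≤ η)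
    (hub : ∀ F : Finset ℕ, ∀ b : ℕ → ℂ,
      (∫ t in S, ‖∑ n ∈ F, b n * expF (Λ n) t‖ ^ 2) ≤ C * ∑ n ∈ F, ‖b n‖ ^ 2)
    (F : Finset ℕ) (b : ℕ → ℂ) (p : ℕ) :
    ‖∑ n ∈ F, (b n * ((Γ n - Λ n : ℝ) : ℂ) ^ p) • EE hSm (Λ n)‖
      ≤ Real.sqrt C * η ^ p * Real.sqrt (∑ n ∈ F, ‖b n‖ ^ 2) := by
  have h1 := norm_upper hSm hC (fun F b => (hub F b)) F (fun n => b n * ((Γ n - Λ n : ℝ) : ℂ) ^ p)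
  refine h1.trans ?_
  rw [mul_assoc]
  refine mul_le_mul_of_nonneg_left ?_ (Real.sqrt_nonneg C)
  have h2 : ∑ n ∈ F, ‖b n * ((Γ n - Λ n : ℝ) : ℂ) ^ p‖ ^ 2
      ≤ (η ^ p) ^ 2 * ∑ n ∈ F, ‖b n‖ ^ 2 := by
    rw [Finset.mul_sum]
    refine Finset.sum_le_sum fun n _ => ?_
    rw [norm_mul, norm_pow, Complex.norm_real, Real.norm_eq_abs, mul_pow, mul_comm]
    refine mul_le_mul_of_nonneg_right ?_ (by positivity)
    exact pow_le_pow_left₀ (by positivity) (pow_le_pow_left₀ (abs_nonneg _) (hη n) p) 2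
  calc Real.sqrt (∑ n ∈ F, ‖b n * ((Γ n - Λ n : ℝ) : ℂ) ^ p‖ ^ 2)
      ≤ Real.sqrt ((η ^ p) ^ 2 * ∑ n ∈ F, ‖b n‖ ^ 2) := Real.sqrt_le_sqrt h2
    _ = η ^ p * Real.sqrt (∑ n ∈ F, ‖b n‖ ^ 2) := by
        rw [Real.sqrt_mul (by positivity), Real.sqrt_sq (by positivity)]

end Perturb

lemma expF_split (lam gam t : ℝ) :
    expF gam t = expF lam t * Complex.exp (2 * ↑π * Complex.I * ((gam - lam : ℝ) : ℂ) * (t : ℂ)) := by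
  rw [expF, expF, ← Complex.exp_add]
  congr 1
  push_cast
  ring

lemma pointwise_split (Λ Γ : ℕ → ℝ) (F : Finset ℕ) (b : ℕ → ℂ) (K : ℕ) (t : ℝ) :
    (∑ n ∈ F, b n * expF (Γ n) t) - ∑ n ∈ F, b n * expF (Λ n) t
    = (∑ j ∈ Finset.range K, (((2 * ↑π * Complex.I * (t : ℂ)) ^ (j+1) / ((j+1).factorial : ℂ))
          * ∑ n ∈ F, (b n * ((Γ n - Λ n : ℝ) : ℂ) ^ (j+1)) * expF (Λ n) t))
      + ∑ n ∈ F, b n * expF (Λ n) t *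
          (Complex.exp (2 * ↑π * Complex.I * ((Γ n - Λ n : ℝ) : ℂ) * (t : ℂ))
            - ∑ k ∈ Finset.range (K+1),
                (2 * ↑π * Complex.I * ((Γ n - Λ n : ℝ) : ℂ) * (t : ℂ)) ^ k / (k.factorial : ℂ)) := by
  rw [← Finset.sum_sub_distrib]
  have hswap : (∑ j ∈ Finset.range K, (((2 * ↑π * Complex.I * (t : ℂ)) ^ (j+1) / ((j+1).factorial : ℂ))
          * ∑ n ∈ F, (b n * ((Γ n - Λ n : ℝ) : ℂ) ^ (j+1)) * expF (Λ n) t))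
      = ∑ n ∈ F, ∑ j ∈ Finset.range K, (((2 * ↑π * Complex.I * (t : ℂ)) ^ (j+1) / ((j+1).factorial : ℂ))
          * ((b n * ((Γ n - Λ n : ℝ) : ℂ) ^ (j+1)) * expF (Λ n) t)) := by
    rw [Finset.sum_comm]
    exact Finset.sum_congr rfl fun j _ => Finset.mul_sum _ _ _
  rw [hswap, ← Finset.sum_add_distrib]
  refine Finset.sum_congr rfl fun n _ => ?_
  set x : ℂ := 2 * ↑π * Complex.I * ((Γ n - Λ n : ℝ) : ℂ) * (t : ℂ) with hxdef
  have hx : ∀ p : ℕ, x ^ p = (2 * ↑π * Complex.I * (t : ℂ)) ^ p * ((Γ n - Λ n : ℝ) : ℂ) ^ p := by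
    intro p
    rw [hxdef, show 2 * ↑π * Complex.I * ((Γ n - Λ n : ℝ) : ℂ) * (t : ℂ)
      = (2 * ↑π * Complex.I * (t : ℂ)) * ((Γ n - Λ n : ℝ) : ℂ) from by ring, mul_pow]
  have hsum : ∑ j ∈ Finset.range K, (((2 * ↑π * Complex.I * (t : ℂ)) ^ (j+1) / ((j+1).factorial : ℂ))
          * ((b n * ((Γ n - Λ n : ℝ) : ℂ) ^ (j+1)) * expF (Λ n) t))
      = b n * expF (Λ n) t * ∑ j ∈ Finset.range K, x ^ (j+1) / ((j+1).factorial : ℂ) := by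
    rw [Finset.mul_sum]
    refine Finset.sum_congr rfl fun j _ => ?_
    rw [hx (j+1)]
    ring
  rw [hsum, expF_split (Λ n) (Γ n) t,
    Finset.sum_range_succ' (fun k => x ^ k / (k.factorial : ℂ)) K]
  simp only [pow_zero, Nat.factorial_zero, Nat.cast_one, div_one]
  ring

lemma coeFn_sum_toLp {α : Type*} [MeasurableSpace α] {μ : Measure α}
    (F : Finset ℕ) (f : ℕ → α → ℂ) (hf : ∀ n, MemLp (f n) 2 μ) :
    (((∑ n ∈ F, ((hf n).toLp (f n))) : Lp ℂ 2 μ) : α → ℂ)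
      =ᵐ[μ] fun t => ∑ n ∈ F, f n t := by
  induction F using Finset.induction_on with
  | empty => simp only [Finset.sum_empty]; exact Lp.coeFn_zero ℂ 2 μ
  | insert n s hn ih =>
    rw [Finset.sum_insert hn]
    filter_upwards [Lp.coeFn_add ((hf n).toLp (f n)) (∑ m ∈ s, ((hf m).toLp (f m))),
      (hf n).coeFn_toLp, ih] with t h1 h2 h3
    simp only [h1, Pi.add_apply, h2, h3, Finset.sum_insert hn]

noncomputable def hkF (Λ Γ : ℕ → ℝ) (F : Finset ℕ) (b : ℕ → ℂ) (p : ℕ) (t : ℝ) : ℂ :=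
  ∑ n ∈ F, (b n * ((Γ n - Λ n : ℝ) : ℂ) ^ p) * expF (Λ n) t

noncomputable def ckF (Λ Γ : ℕ → ℝ) (F : Finset ℕ) (b : ℕ → ℂ) (p : ℕ) (t : ℝ) : ℂ :=
  ((2 * ↑π * Complex.I * (t : ℂ)) ^ p / (p.factorial : ℂ)) * hkF Λ Γ F b p t

noncomputable def tlF (Λ Γ : ℕ → ℝ) (F : Finset ℕ) (b : ℕ → ℂ) (K : ℕ) (t : ℝ) : ℂ :=
  ∑ n ∈ F, b n * expF (Λ n) t *
    (Complex.exp (2 * ↑π * Complex.I * ((Γ n - Λ n : ℝ) : ℂ) * (t : ℂ))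
      - ∑ k ∈ Finset.range (K+1),
          (2 * ↑π * Complex.I * ((Γ n - Λ n : ℝ) : ℂ) * (t : ℂ)) ^ k / (k.factorial : ℂ))

lemma hkF_norm_le (Λ Γ : ℕ → ℝ) (F : Finset ℕ) (b : ℕ → ℂ) (p : ℕ) (t : ℝ) :
    ‖hkF Λ Γ F b p t‖ ≤ ∑ n ∈ F, ‖b n * ((Γ n - Λ n : ℝ) : ℂ) ^ p‖ := by
  refine (norm_sum_le _ _).trans (Finset.sum_le_sum fun n _ => ?_)
  rw [norm_mul, expF_norm, mul_one]

lemma norm_fact_div (t : ℝ) (p : ℕ) :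
    ‖(2 * ↑π * Complex.I * (t : ℂ)) ^ p / (p.factorial : ℂ)‖
      = (2 * π * |t|) ^ p / (p.factorial : ℝ) := by
  rw [norm_div, norm_pow, norm_two_pi_I_mul]
  norm_num

lemma norm_x_le {t d R η : ℝ} (ht : |t| ≤ R) (hd : |d| ≤ η) :
    ‖2 * ↑π * Complex.I * (d : ℂ) * (t : ℂ)‖ ≤ 2 * π * R * η := by
  have h : (2 * ↑π * Complex.I * (d : ℂ) * (t : ℂ)) = 2 * ↑π * Complex.I * ((d * t : ℝ) : ℂ) := by
    push_cast; ring
  rw [h, norm_two_pi_I_mul, abs_mul]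
  have h2 : |d| * |t| ≤ η * R := mul_le_mul hd ht (abs_nonneg t) ((abs_nonneg d).trans hd)
  nlinarith [Real.pi_pos]

section Main

variable {S : Set ℝ} (hSm : MeasurableSet S) [IsFiniteMeasure (volume.restrict S)]
  {Λ Γ : ℕ → ℝ} {η R C : ℝ}

include hSm

lemma memL2_ckF (hR0 : 0 < R) (hR : ∀ t ∈ S, |t| ≤ R)
    (F : Finset ℕ) (b : ℕ → ℂ) (p : ℕ) :
    MemLp (ckF Λ Γ F b p) 2 (volume.restrict S) := by
  refine memL2_of_bound hSm (by unfold ckF hkF expF; fun_prop)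
    ((2 * π * R) ^ p / (p.factorial : ℝ) * ∑ n ∈ F, ‖b n * ((Γ n - Λ n : ℝ) : ℂ) ^ p‖)
    (fun t ht => ?_)
  rw [ckF, norm_mul, norm_fact_div]
  have h1 : (2 * π * |t|) ^ p / (p.factorial : ℝ) ≤ (2 * π * R) ^ p / (p.factorial : ℝ) := by
    gcongr
    exact hR t ht
  exact mul_le_mul h1 (hkF_norm_le Λ Γ F b p t) (norm_nonneg _) (by positivity)

lemma memL2_tlF (hR0 : 0 < R) (hR : ∀ t ∈ S, |t| ≤ R) (hη0 : 0 ≤ η)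
    (hη : ∀ n, |Γ n - Λ n| ≤ η) (F : Finset ℕ) (b : ℕ → ℂ) (K : ℕ) :
    MemLp (tlF Λ Γ F b K) 2 (volume.restrict S) := by
  refine memL2_of_bound hSm (by unfold tlF expF; fun_prop)
    ((∑ n ∈ F, ‖b n‖) * (Real.exp (2 * π * R * η)
      - ∑ k ∈ Finset.range (K+1), (2 * π * R * η) ^ k / (k.factorial : ℝ)))
    (fun t ht => ?_)
  rw [tlF]
  refine (norm_sum_le _ _).trans ?_
  rw [Finset.sum_mul]
  refine Finset.sum_le_sum fun n _ => ?_
  rw [norm_mul, norm_mul, expF_norm, mul_one]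
  exact mul_le_mul_of_nonneg_left
    (exp_tail_bound (norm_x_le (hR t ht) (hη n)) (K+1)) (norm_nonneg _)

end Main

section Main2

variable {S : Set ℝ} (hSm : MeasurableSet S) [IsFiniteMeasure (volume.restrict S)]
  {Λ Γ : ℕ → ℝ} {η R C : ℝ}

include hSm

lemma memL2_hkF (F : Finset ℕ) (b : ℕ → ℂ) (p : ℕ) :
    MemLp (hkF Λ Γ F b p) 2 (volume.restrict S) :=
  memL2_of_bound hSm (by unfold hkF expF; fun_prop) _ (fun t _ => hkF_norm_le Λ Γ F b p t)

lemma norm_sum_smul_EE (F : Finset ℕ) (b : ℕ → ℂ) (l : ℕ → ℝ) :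
    ‖∑ n ∈ F, b n • EE hSm (l n)‖
      = (eLpNorm (fun t => ∑ n ∈ F, b n * expF (l n) t) 2 (volume.restrict S)).toReal := by
  rw [Lp.norm_def]
  congr 1
  exact eLpNorm_congr_ae (coeFn_sum_smul_toLp F b (fun n => expF (l n))
    (fun n => memL2_expF hSm (l n)))

lemma norm_ckF_toLp_le (hR0 : 0 < R) (hR : ∀ t ∈ S, |t| ≤ R)
    (hη0 : 0 ≤ η) (hη : ∀ n, |Γ n - Λ n| ≤ η) (hC : 0 ≤ C)
    (hub : ∀ F : Finset ℕ, ∀ b : ℕ → ℂ,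
      (∫ t in S, ‖∑ n ∈ F, b n * expF (Λ n) t‖ ^ 2) ≤ C * ∑ n ∈ F, ‖b n‖ ^ 2)
    (F : Finset ℕ) (b : ℕ → ℂ) (p : ℕ) :
    ‖(memL2_ckF hSm hR0 hR F b p).toLp (ckF Λ Γ F b p)‖
      ≤ (2 * π * R) ^ p / (p.factorial : ℝ)
          * (Real.sqrt C * η ^ p * Real.sqrt (∑ n ∈ F, ‖b n‖ ^ 2)) := by
  set μ := volume.restrict S
  set r : ℝ := (2 * π * R) ^ p / (p.factorial : ℝ) with hrdef
  have hr0 : 0 ≤ r := by positivity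
  rw [Lp.norm_toLp]
  have hmono : eLpNorm (ckF Λ Γ F b p) 2 μ ≤ eLpNorm (r • hkF Λ Γ F b p) 2 μ := by
    refine eLpNorm_mono_ae ?_
    filter_upwards [ae_restrict_mem hSm] with t ht
    rw [Pi.smul_apply, norm_smul, Real.norm_eq_abs, _root_.abs_of_nonneg hr0]
    show ‖((2 * ↑π * Complex.I * (t : ℂ)) ^ p / (p.factorial : ℂ)) * hkF Λ Γ F b p t‖ ≤ _
    rw [norm_mul, norm_fact_div]
    refine mul_le_mul_of_nonneg_right ?_ (norm_nonneg _)
    rw [hrdef]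
    gcongr
    exact hR t ht
  have hfin : eLpNorm (r • hkF Λ Γ F b p) 2 μ ≠ ⊤ := by
    rw [eLpNorm_const_smul]
    exact ENNReal.mul_ne_top ENNReal.coe_ne_top (memL2_hkF hSm F b p).eLpNorm_ne_top
  refine le_trans (ENNReal.toReal_mono hfin hmono) ?_
  rw [eLpNorm_const_smul, ENNReal.toReal_mul, toReal_enorm,
    Real.norm_eq_abs, _root_.abs_of_nonneg hr0]
  refine mul_le_mul_of_nonneg_left ?_ hr0
  have heq : (eLpNorm (hkF Λ Γ F b p) 2 μ).toReal
      = ‖∑ n ∈ F, (b n * ((Γ n - Λ n : ℝ) : ℂ) ^ p) • EE hSm (Λ n)‖ := by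
    rw [norm_sum_smul_EE hSm]
    rfl
  rw [heq]
  exact hk_norm_bound hSm hC hη0 hη hub F b p

end Main2

section Main3

variable {S : Set ℝ} (hSm : MeasurableSet S) [IsFiniteMeasure (volume.restrict S)]
  {Λ Γ : ℕ → ℝ} {η R C : ℝ}

lemma tlF_pt_bound (hR : ∀ t ∈ S, |t| ≤ R) (hη : ∀ n, |Γ n - Λ n| ≤ η)
    (F : Finset ℕ) (b : ℕ → ℂ) (K : ℕ) {t : ℝ} (ht : t ∈ S) :
    ‖tlF Λ Γ F b K t‖ ≤ (∑ n ∈ F, ‖b n‖) * (Real.exp (2 * π * R * η)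
      - ∑ k ∈ Finset.range (K+1), (2 * π * R * η) ^ k / (k.factorial : ℝ)) := by
  rw [tlF]
  refine (norm_sum_le _ _).trans ?_
  rw [Finset.sum_mul]
  refine Finset.sum_le_sum fun n _ => ?_
  rw [norm_mul, norm_mul, expF_norm, mul_one]
  exact mul_le_mul_of_nonneg_left
    (exp_tail_bound (norm_x_le (hR t ht) (hη n)) (K+1)) (norm_nonneg _)

include hSm

lemma norm_tlF_toLp_le (hR0 : 0 < R) (hR : ∀ t ∈ S, |t| ≤ R)
    (hη0 : 0 ≤ η) (hη : ∀ n, |Γ n - Λ n| ≤ η) (F : Finset ℕ) (b : ℕ → ℂ) (K : ℕ) :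
    ‖(memL2_tlF hSm hR0 hR hη0 hη F b K).toLp (tlF Λ Γ F b K)‖
      ≤ ((volume.restrict S) Set.univ ^ ((2 : ℝ≥0∞).toReal)⁻¹).toReal
          * ((∑ n ∈ F, ‖b n‖) * (Real.exp (2 * π * R * η)
            - ∑ k ∈ Finset.range (K+1), (2 * π * R * η) ^ k / (k.factorial : ℝ))) := by
  set μ := volume.restrict S
  set B : ℝ := (∑ n ∈ F, ‖b n‖) * (Real.exp (2 * π * R * η)
    - ∑ k ∈ Finset.range (K+1), (2 * π * R * η) ^ k / (k.factorial : ℝ)) with hBdef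
  have hB0 : 0 ≤ B := by
    have h1 : ∑ k ∈ Finset.range (K+1), (2 * π * R * η) ^ k / (k.factorial : ℝ)
        ≤ Real.exp (2 * π * R * η) := exp_partial_le _ (by positivity) _
    have h2 : (0:ℝ) ≤ ∑ n ∈ F, ‖b n‖ := Finset.sum_nonneg fun n _ => norm_nonneg _
    rw [hBdef]
    nlinarith
  rw [Lp.norm_toLp]
  have hle : eLpNorm (tlF Λ Γ F b K) 2 μ ≤ μ Set.univ ^ ((2:ℝ≥0∞).toReal)⁻¹
      * ENNReal.ofReal B := by
    refine eLpNorm_le_of_ae_bound ?_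
    filter_upwards [ae_restrict_mem hSm] with t ht
    exact tlF_pt_bound hR hη F b K ht
  have hfin : μ Set.univ ^ ((2:ℝ≥0∞).toReal)⁻¹ * ENNReal.ofReal B ≠ ⊤ := by
    refine ENNReal.mul_ne_top ?_ ENNReal.ofReal_ne_top
    exact ENNReal.rpow_ne_top_of_nonneg (by norm_num) (measure_ne_top μ _)
  refine le_trans (ENNReal.toReal_mono hfin hle) ?_
  rw [ENNReal.toReal_mul, ENNReal.toReal_ofReal hB0]

lemma split_eq (hR0 : 0 < R) (hR : ∀ t ∈ S, |t| ≤ R)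
    (hη0 : 0 ≤ η) (hη : ∀ n, |Γ n - Λ n| ≤ η) (F : Finset ℕ) (b : ℕ → ℂ) (K : ℕ) :
    ∑ n ∈ F, b n • EE hSm (Γ n) - ∑ n ∈ F, b n • EE hSm (Λ n)
      = (∑ j ∈ Finset.range K, (memL2_ckF hSm hR0 hR F b (j+1)).toLp (ckF Λ Γ F b (j+1)))
        + (memL2_tlF hSm hR0 hR hη0 hη F b K).toLp (tlF Λ Γ F b K) := by
  apply Lp.ext
  have h1 := coeFn_sum_smul_toLp F b (fun n => expF (Γ n)) (fun n => memL2_expF hSm (Γ n))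
  have h2 := coeFn_sum_smul_toLp F b (fun n => expF (Λ n)) (fun n => memL2_expF hSm (Λ n))
  have h3 := coeFn_sum_toLp (Finset.range K) (fun j => ckF Λ Γ F b (j+1))
    (fun j => memL2_ckF hSm hR0 hR F b (j+1))
  have h4 := (memL2_tlF hSm hR0 hR hη0 hη F b K).coeFn_toLp
  filter_upwards [Lp.coeFn_sub (∑ n ∈ F, b n • EE hSm (Γ n)) (∑ n ∈ F, b n • EE hSm (Λ n)),
    Lp.coeFn_add (∑ j ∈ Finset.range K, (memL2_ckF hSm hR0 hR F b (j+1)).toLp (ckF Λ Γ F b (j+1)))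
      ((memL2_tlF hSm hR0 hR hη0 hη F b K).toLp (tlF Λ Γ F b K)),
    h1, h2, h3, h4] with t e1 e2 e3 e4 e5 e6
  rw [e1, Pi.sub_apply]
  simp only [EE]
  rw [e3, e4, e2, Pi.add_apply, e5, e6]
  simp only [ckF, hkF, tlF]
  exact pointwise_split Λ Γ F b K t

end Main3

section Main4

variable {S : Set ℝ} (hSm : MeasurableSet S) [IsFiniteMeasure (volume.restrict S)]
  {Λ Γ : ℕ → ℝ} {η R C : ℝ}

include hSm

lemma perturb_bound (hR0 : 0 < R) (hR : ∀ t ∈ S, |t| ≤ R)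
    (hη0 : 0 ≤ η) (hη : ∀ n, |Γ n - Λ n| ≤ η) (hC : 0 ≤ C)
    (hub : ∀ F : Finset ℕ, ∀ b : ℕ → ℂ,
      (∫ t in S, ‖∑ n ∈ F, b n * expF (Λ n) t‖ ^ 2) ≤ C * ∑ n ∈ F, ‖b n‖ ^ 2)
    (F : Finset ℕ) (b : ℕ → ℂ) :
    ‖∑ n ∈ F, b n • EE hSm (Γ n) - ∑ n ∈ F, b n • EE hSm (Λ n)‖
      ≤ Real.sqrt C * (Real.exp (2 * π * R * η) - 1) * Real.sqrt (∑ n ∈ F, ‖b n‖ ^ 2) := by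
  set M : ℝ := 2 * π * R * η with hMdef
  have hM0 : 0 ≤ M := by positivity
  set sb : ℝ := Real.sqrt (∑ n ∈ F, ‖b n‖ ^ 2) with hsbdef
  set X : ℝ := ∑ n ∈ F, ‖b n‖ with hXdef
  set κ : ℝ := ((volume.restrict S) Set.univ ^ ((2 : ℝ≥0∞).toReal)⁻¹).toReal with hκdef
  set A : ℝ := Real.sqrt C * (Real.exp M - 1) * sb with hAdef
  have key : ∀ K : ℕ, ‖∑ n ∈ F, b n • EE hSm (Γ n) - ∑ n ∈ F, b n • EE hSm (Λ n)‖
      ≤ A + κ * (X * (Real.exp M - ∑ k ∈ Finset.range (K+1), M ^ k / (k.factorial : ℝ))) := by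
    intro K
    rw [split_eq hSm hR0 hR hη0 hη F b K]
    refine (norm_add_le _ _).trans ?_
    refine add_le_add ?_ (norm_tlF_toLp_le hSm hR0 hR hη0 hη F b K)
    refine (norm_sum_le _ _).trans ?_
    have hterm : ∀ j ∈ Finset.range K,
        ‖(memL2_ckF hSm hR0 hR F b (j+1)).toLp (ckF Λ Γ F b (j+1))‖
          ≤ Real.sqrt C * sb * (M ^ (j+1) / ((j+1).factorial : ℝ)) := by
      intro j _
      refine (norm_ckF_toLp_le hSm hR0 hR hη0 hη hC hub F b (j+1)).trans_eq ?_
      rw [hMdef, show 2 * π * R * η = (2 * π * R) * η from by ring, mul_pow]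
      ring
    refine (Finset.sum_le_sum hterm).trans ?_
    rw [← Finset.mul_sum]
    have hsum_le : ∑ j ∈ Finset.range K, M ^ (j+1) / ((j+1).factorial : ℝ)
        ≤ Real.exp M - 1 := by
      have h := exp_partial_le M hM0 (K+1)
      rw [Finset.sum_range_succ' (fun k => M ^ k / (k.factorial : ℝ)) K] at h
      simp only [pow_zero, Nat.factorial_zero, Nat.cast_one, div_one] at h
      linarith
    have hsb0 : 0 ≤ sb := Real.sqrt_nonneg _
    have h2 : Real.sqrt C * sb * (∑ j ∈ Finset.range K, M ^ (j+1) / ((j+1).factorial : ℝ))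
        ≤ Real.sqrt C * sb * (Real.exp M - 1) :=
      mul_le_mul_of_nonneg_left hsum_le (by positivity)
    rw [hAdef]
    nlinarith [Real.sqrt_nonneg C]
  have hrtend : Filter.Tendsto
      (fun K : ℕ => A + κ * (X * (Real.exp M - ∑ k ∈ Finset.range (K+1), M ^ k / (k.factorial : ℝ))))
      Filter.atTop (nhds A) := by
    have h1 : Filter.Tendsto
        (fun K : ℕ => Real.exp M - ∑ k ∈ Finset.range (K+1), M ^ k / (k.factorial : ℝ))
        Filter.atTop (nhds 0) :=
      (exp_tail_tendsto M).comp (Filter.tendsto_add_atTop_nat 1)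
    have h2 := ((h1.const_mul X).const_mul κ).const_add A
    simpa using h2
  exact ge_of_tendsto hrtend (Filter.Eventually.of_forall key)

end Main4

lemma conj_expF (l t : ℝ) :
    (starRingEnd ℂ) (expF l t) = Complex.exp (-(2 * π * Complex.I * l * t)) := by
  rw [expF, ← Complex.exp_conj]
  congr 1
  simp only [map_mul, map_ofNat, Complex.conj_I, Complex.conj_ofReal]
  ring

lemma inner_EE {S : Set ℝ} (hSm : MeasurableSet S) [IsFiniteMeasure (volume.restrict S)]
    (l : ℝ) (f : Lp ℂ 2 (volume.restrict S)) :
    (inner ℂ (EE hSm l) f : ℂ) = ∫ t in S, f t * Complex.exp (-(2 * π * Complex.I * l * t)) := by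
  rw [L2.inner_def]
  refine integral_congr_ae ?_
  filter_upwards [(memL2_expF hSm l).coeFn_toLp] with t h
  rw [RCLike.inner_apply']
  simp only [EE]
  rw [h, conj_expF, mul_comm]

set_option maxHeartbeats 4000000 in
/-- Paley–Wiener stability: a real perturbation of a Riesz basis of exponentials of
`L²(S)`, `S` bounded of positive measure, smaller than some `η = η(S,Λ) > 0`,
is again a Riesz basis of exponentials. -/
theorem paley_wiener_stability (S : Set ℝ) (hSm : MeasurableSet S)
    (hSb : Bornology.IsBounded S) (hS0 : 0 < volume S)
    (Λ : ℕ → ℝ) (hRB : IsExpRieszBasisSeq S Λ) :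
    ∃ η : ℝ, 0 < η ∧ ∀ Γ : ℕ → ℝ, (∀ n, |Λ n - Γ n| < η) →
      IsExpRieszBasisSeq S Γ := by
  classical
  haveI hfinm : IsFiniteMeasure (volume.restrict S) :=
    ⟨by rw [Measure.restrict_apply_univ]; exact hSb.measure_lt_top⟩
  obtain ⟨hcomp, c, C, hc, hC, hbounds⟩ := hRB
  obtain ⟨R0, hR0sub⟩ := hSb.subset_closedBall 0
  set R : ℝ := max R0 1 with hRdef
  have hR0 : 0 < R := lt_of_lt_of_le one_pos (le_max_right _ _)
  have hR : ∀ t ∈ S, |t| ≤ R := by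
    intro t ht
    have h1 := hR0sub ht
    rw [Metric.mem_closedBall, Real.dist_eq, sub_zero] at h1
    exact h1.trans (le_max_left _ _)
  have hlb : ∀ F : Finset ℕ, ∀ b : ℕ → ℂ,
      c * ∑ n ∈ F, ‖b n‖ ^ 2 ≤ ∫ t in S, ‖∑ n ∈ F, b n * expF (Λ n) t‖ ^ 2 :=
    fun F b => (bounds_transfer hbounds F b).1
  have hub : ∀ F : Finset ℕ, ∀ b : ℕ → ℂ,
      (∫ t in S, ‖∑ n ∈ F, b n * expF (Λ n) t‖ ^ 2) ≤ C * ∑ n ∈ F, ‖b n‖ ^ 2 :=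
    fun F b => (bounds_transfer hbounds F b).2
  have hsc : 0 < Real.sqrt c := Real.sqrt_pos.mpr hc
  have hsC : 0 < Real.sqrt C := Real.sqrt_pos.mpr hC
  set η : ℝ := Real.log (1 + Real.sqrt c / (2 * Real.sqrt C)) / (2 * π * R) with hηdef
  have hηpos : 0 < η := by
    refine div_pos (Real.log_pos ?_) (by positivity)
    nlinarith [div_pos hsc (by positivity : (0:ℝ) < 2 * Real.sqrt C)]
  refine ⟨η, hηpos, ?_⟩
  intro Γ hΓ
  have hΓ' : ∀ n, |Γ n - Λ n| ≤ η := fun n => by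
    rw [abs_sub_comm]; exact (hΓ n).le
  have hexp : Real.exp (2 * π * R * η) = 1 + Real.sqrt c / (2 * Real.sqrt C) := by
    rw [hηdef, mul_div_cancel₀ _ (by positivity : (2:ℝ) * π * R ≠ 0)]
    exact Real.exp_log (by positivity)
  have hε : Real.sqrt C * (Real.exp (2 * π * R * η) - 1) = Real.sqrt c / 2 := by
    rw [hexp]
    field_simp
    ring
  have hpert : ∀ F : Finset ℕ, ∀ b : ℕ → ℂ,
      ‖∑ n ∈ F, b n • EE hSm (Γ n) - ∑ n ∈ F, b n • EE hSm (Λ n)‖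
        ≤ (Real.sqrt c / 2) * Real.sqrt (∑ n ∈ F, ‖b n‖ ^ 2) := by
    intro F b
    have h := perturb_bound hSm hR0 hR hηpos.le hΓ' hC.le hub F b
    rwa [hε] at h
  constructor
  · -- completeness of E(Γ)
    intro f hf hmom
    set Fp : Lp ℂ 2 (volume.restrict S) := hf.toLp f with hFpdef
    have hFi : ∀ n, (inner ℂ (EE hSm (Γ n)) Fp : ℂ) = 0 := by
      intro n
      rw [inner_EE hSm (Γ n) Fp]
      rw [← hmom n]
      refine integral_congr_ae ?_
      filter_upwards [hf.coeFn_toLp] with t h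
      rw [h]
    have hdense : Dense (↑(Submodule.span ℂ (Set.range fun n => EE hSm (Λ n)))
        : Set (Lp ℂ 2 (volume.restrict S))) := by
      rw [Submodule.dense_iff_topologicalClosure_eq_top,
        Submodule.topologicalClosure_eq_top_iff, Submodule.eq_bot_iff]
      intro g hg
      have hgz : ∀ n, (inner ℂ (EE hSm (Λ n)) g : ℂ) = 0 := fun n =>
        (Submodule.mem_orthogonal _ g).mp hg _ (Submodule.subset_span ⟨n, rfl⟩)
      have hg0 : ∀ᵐ t ∂(volume.restrict S), (g : ℝ → ℂ) t = 0 := by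
        refine hcomp _ (Lp.memLp g) fun n => ?_
        rw [← inner_EE hSm (Λ n) g]
        exact hgz n
      exact Lp.eq_zero_iff_ae_eq_zero.mpr hg0
    have hmain : ∀ δ : ℝ, 0 < δ → ‖Fp‖ ≤ 3 * δ := by
      intro δ hδ
      obtain ⟨g, hgK, hgd⟩ := Metric.mem_closure_iff.mp (hdense Fp) δ hδ
      obtain ⟨a, ha⟩ := Finsupp.mem_span_range_iff_exists_finsupp.mp hgK
      have hga : g = ∑ n ∈ a.support, a n • EE hSm (Λ n) := by
        rw [← ha]; rfl
      set sa : ℝ := Real.sqrt (∑ n ∈ a.support, ‖a n‖ ^ 2) with hsadef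
      have hsa0 : 0 ≤ sa := Real.sqrt_nonneg _
      have hsa : Real.sqrt c * sa ≤ ‖g‖ := by
        rw [hga]; exact norm_lower hSm hc.le hlb a.support a
      have hinner : (inner ℂ Fp g : ℂ)
          = inner ℂ Fp (∑ n ∈ a.support, a n • (EE hSm (Λ n) - EE hSm (Γ n))) := by
        rw [hga, inner_sum, inner_sum]
        refine Finset.sum_congr rfl fun n _ => ?_
        rw [inner_smul_right, inner_smul_right, inner_sub_right]
        have h0 : (inner ℂ Fp (EE hSm (Γ n)) : ℂ) = 0 := by
          rw [← inner_conj_symm, hFi n, map_zero]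
        rw [h0, sub_zero]
      have hnormdiff : ‖∑ n ∈ a.support, a n • (EE hSm (Λ n) - EE hSm (Γ n))‖
          ≤ (Real.sqrt c / 2) * sa := by
        have h := hpert a.support a
        have heq : ∑ n ∈ a.support, a n • (EE hSm (Λ n) - EE hSm (Γ n))
            = ∑ n ∈ a.support, a n • EE hSm (Λ n) - ∑ n ∈ a.support, a n • EE hSm (Γ n) := by
          rw [← Finset.sum_sub_distrib]
          exact Finset.sum_congr rfl fun n _ => smul_sub _ _ _
        rw [heq, norm_sub_rev]
        exact h
      have hgd' : ‖Fp - g‖ < δ := by rwa [← dist_eq_norm]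
      have hest : ‖Fp‖ ^ 2 ≤ ‖Fp‖ * δ + ‖Fp‖ * ((Real.sqrt c / 2) * sa) := by
        rw [@norm_sq_eq_re_inner ℂ]
        have hsplit : (inner ℂ Fp Fp : ℂ) = inner ℂ Fp (Fp - g) + inner ℂ Fp g := by
          rw [← inner_add_right, sub_add_cancel]
        rw [hsplit, map_add]
        have b1 : RCLike.re (inner ℂ Fp (Fp - g) : ℂ) ≤ ‖Fp‖ * δ :=
          (RCLike.re_le_norm _).trans ((norm_inner_le_norm _ _).trans
            (mul_le_mul_of_nonneg_left hgd'.le (norm_nonneg _)))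
        have b2 : RCLike.re (inner ℂ Fp g : ℂ) ≤ ‖Fp‖ * ((Real.sqrt c / 2) * sa) := by
          refine (RCLike.re_le_norm _).trans ?_
          rw [hinner]
          exact (norm_inner_le_norm _ _).trans
            (mul_le_mul_of_nonneg_left hnormdiff (norm_nonneg _))
        linarith
      have hgnorm : ‖g‖ ≤ ‖Fp‖ + δ := by
        have h1 : ‖g‖ - ‖Fp‖ ≤ ‖g - Fp‖ := norm_sub_norm_le _ _
        rw [norm_sub_rev] at h1
        linarith
      have hsa_le : Real.sqrt c * sa ≤ ‖Fp‖ + δ := hsa.trans hgnorm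
      by_contra hcon
      push_neg at hcon
      have hF0 : 0 < ‖Fp‖ := lt_of_le_of_lt (by positivity) hcon
      nlinarith [norm_nonneg Fp]
    have hF0 : Fp = 0 := by
      have h0 : ‖Fp‖ ≤ 0 := by
        by_contra h
        push_neg at h
        have := hmain (‖Fp‖ / 6) (by linarith)
        linarith
      exact norm_le_zero_iff.mp h0
    have hz : (Fp : ℝ → ℂ) =ᵐ[volume.restrict S] 0 := by
      rw [hF0]; exact Lp.coeFn_zero _ _ _
    filter_upwards [hf.coeFn_toLp, hz] with t h1 h2
    rw [← h1]
    exact h2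
  · -- Riesz bounds for E(Γ)
    refine ⟨c / 4, (Real.sqrt C + Real.sqrt c / 2) ^ 2, by positivity, by positivity, fun a => ?_⟩
    set F := a.support with hFdef
    set sa : ℝ := Real.sqrt (∑ n ∈ F, ‖a n‖ ^ 2) with hsadef
    have hsa0 : 0 ≤ sa := Real.sqrt_nonneg _
    have hsasq : sa ^ 2 = ∑ n ∈ F, ‖a n‖ ^ 2 :=
      Real.sq_sqrt (Finset.sum_nonneg fun n _ => by positivity)
    have hdiff := hpert F a
    have hlow : Real.sqrt c * sa ≤ ‖∑ n ∈ F, a n • EE hSm (Λ n)‖ :=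
      norm_lower hSm hc.le hlb F a
    have hup : ‖∑ n ∈ F, a n • EE hSm (Λ n)‖ ≤ Real.sqrt C * sa :=
      norm_upper hSm hC.le hub F a
    have hlowΓ : (Real.sqrt c / 2) * sa ≤ ‖∑ n ∈ F, a n • EE hSm (Γ n)‖ := by
      have h1 : ‖∑ n ∈ F, a n • EE hSm (Λ n)‖ - ‖∑ n ∈ F, a n • EE hSm (Γ n)‖
          ≤ ‖∑ n ∈ F, a n • EE hSm (Γ n) - ∑ n ∈ F, a n • EE hSm (Λ n)‖ := by
        rw [norm_sub_rev]
        exact norm_sub_norm_le _ _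
      linarith
    have hupΓ : ‖∑ n ∈ F, a n • EE hSm (Γ n)‖ ≤ (Real.sqrt C + Real.sqrt c / 2) * sa := by
      have h1 : ‖∑ n ∈ F, a n • EE hSm (Γ n)‖ - ‖∑ n ∈ F, a n • EE hSm (Λ n)‖
          ≤ ‖∑ n ∈ F, a n • EE hSm (Γ n) - ∑ n ∈ F, a n • EE hSm (Λ n)‖ :=
        norm_sub_norm_le _ _
      nlinarith
    have hint : (∫ t in S, ‖∑ n ∈ F, a n * expF (Γ n) t‖ ^ 2)
        = ‖∑ n ∈ F, a n • EE hSm (Γ n)‖ ^ 2 := by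
      simp only [EE]
      exact integral_eq_norm_sq hSm F (fun n => a n) Γ
    constructor
    · rw [hint, ← hsasq]
      have hsq : ((Real.sqrt c / 2) * sa) ^ 2 ≤ ‖∑ n ∈ F, a n • EE hSm (Γ n)‖ ^ 2 :=
        pow_le_pow_left₀ (by positivity) hlowΓ 2
      have hcs : Real.sqrt c ^ 2 = c := Real.sq_sqrt hc.le
      nlinarith
    · rw [hint, ← hsasq]
      have hsq : ‖∑ n ∈ F, a n • EE hSm (Γ n)‖ ^ 2 ≤ ((Real.sqrt C + Real.sqrt c / 2) * sa) ^ 2 :=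
        pow_le_pow_left₀ (norm_nonneg _) hupΓ 2
      nlinarith
end

section
/- Let a_1 ≤ … ≤ a_L and b_1 ≤ … ≤ b_L be 2L numbers in [0,1]. Define Φ(t) = Σ_{l=1}^L 1_{[0,b_l]}(t) + Σ_{l=1}^L 1_{[a_l,1]}(t) and A_{≥n} = Φ^{-1}([n, 2L]) for 1 ≤ n ≤ 2L. Then each set A_{≥n} is a union of at most L intervals of the circle ℝ/ℤ. Moreover, if some A_{≥n} is a union of exactly L such intervals, then the sequences (a_l) and (b_l) interlace: either a_1 ≤ b_1 ≤ a_2 ≤ b_2 ≤ … or b_1 ≤ a_1 ≤ b_2 ≤ a_2 ≤ … -/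
set_option maxHeartbeats 1000000


/-- A cyclic interval (arc) of the circle obtained from `[0,1]` by identifying the
endpoints: either an ordinary interval `[x,y]` or a wrap-around `[x,1] ∪ [0,y]`. -/
def CyclicInterval (x y : ℝ) : Set ℝ :=
  if x ≤ y then Set.Icc x y else Set.Icc x 1 ∪ Set.Icc 0 y

/-- `Φ(t) = Σ_l 1_{[0,b_l]}(t) + Σ_l 1_{[a_l,1]}(t)` for `t ∈ [0,1]`. -/
noncomputable def PhiFn (L : ℕ) (a b : Fin L → ℝ) (t : ℝ) : ℕ :=
  Set.ncard {l : Fin L | 0 ≤ t ∧ t ≤ b l} + Set.ncard {l : Fin L | a l ≤ t ∧ t ≤ 1}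

/-- `A_{≥n} = Φ^{-1}([n, 2L])`, within `[0,1]`. -/
noncomputable def AgeqPhi (L : ℕ) (a b : Fin L → ℝ) (n : ℕ) : Set ℝ :=
  {t ∈ Set.Icc (0 : ℝ) 1 | n ≤ PhiFn L a b t ∧ PhiFn L a b t ≤ 2 * L}

/-- The sequences `u` and `v` interlace in the order `u_1 ≤ v_1 ≤ u_2 ≤ v_2 ≤ …`. -/
def InterlaceLe (L : ℕ) (u v : Fin L → ℝ) : Prop :=
  (∀ i, u i ≤ v i) ∧ ∀ i : Fin L, ∀ h : i.val + 1 < L, v i ≤ u ⟨i.val + 1, h⟩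

lemma Cyc_Icc {x y : ℝ} (h : x ≤ y) : CyclicInterval x y = Set.Icc x y := if_pos h

lemma Cyc_wrap {x y : ℝ} (h : ¬ x ≤ y) :
    CyclicInterval x y = Set.Icc x 1 ∪ Set.Icc 0 y := if_neg h

lemma Cyc_pt (x : ℝ) : CyclicInterval x x = {x} := by
  rw [Cyc_Icc le_rfl, Set.Icc_self]

variable {L : ℕ}

lemma ncard_le_L (s : Set (Fin L)) : s.ncard ≤ L := by
  have := Set.ncard_le_ncard (Set.subset_univ s) Set.finite_univ
  simpa [Set.ncard_univ] using this

lemma cA_lower {a : Fin L → ℝ} (ha : Monotone a) (i : Fin L) {t : ℝ} (h : a i ≤ t) :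
    i.val + 1 ≤ {l : Fin L | a l ≤ t}.ncard := by
  have hsub : (Set.Iic i) ⊆ {l : Fin L | a l ≤ t} := fun l hl => le_trans (ha hl) h
  have h1 : (Set.Iic i).ncard = i.val + 1 := by
    rw [← Finset.coe_Iic, Set.ncard_coe_finset, Fin.card_Iic]
  calc i.val + 1 = (Set.Iic i).ncard := h1.symm
    _ ≤ _ := Set.ncard_le_ncard hsub (Set.toFinite _)

lemma cA_upper {a : Fin L → ℝ} (ha : Monotone a) (i : Fin L) {t : ℝ}
    (h : i.val + 1 ≤ {l : Fin L | a l ≤ t}.ncard) : a i ≤ t := by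
  by_contra hc
  push_neg at hc
  have hsub : {l : Fin L | a l ≤ t} ⊆ Set.Iio i := by
    intro l hl
    by_contra hli
    simp only [Set.mem_Iio, not_lt] at hli
    exact absurd (le_trans (ha hli) hl) (not_le.2 hc)
  have h1 : (Set.Iio i).ncard = i.val := by
    rw [← Finset.coe_Iio, Set.ncard_coe_finset, Fin.card_Iio]
  have := Set.ncard_le_ncard hsub (Set.toFinite _)
  omega

lemma cB_lower {b : Fin L → ℝ} (hb : Monotone b) (i : Fin L) {t : ℝ} (h : t ≤ b i) :
    L - i.val ≤ {l : Fin L | t ≤ b l}.ncard := by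
  have hsub : (Set.Ici i) ⊆ {l : Fin L | t ≤ b l} := fun l hl => le_trans h (hb hl)
  have h1 : (Set.Ici i).ncard = L - i.val := by
    rw [← Finset.coe_Ici, Set.ncard_coe_finset, Fin.card_Ici]
  calc L - i.val = (Set.Ici i).ncard := h1.symm
    _ ≤ _ := Set.ncard_le_ncard hsub (Set.toFinite _)

lemma cB_upper {b : Fin L → ℝ} (hb : Monotone b) (i : Fin L) {t : ℝ}
    (h : L - i.val ≤ {l : Fin L | t ≤ b l}.ncard) : t ≤ b i := by
  by_contra hc
  push_neg at hc
  have hsub : {l : Fin L | t ≤ b l} ⊆ Set.Ioi i := by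
    intro l hl
    by_contra hli
    simp only [Set.mem_Ioi, not_lt] at hli
    exact absurd (le_trans hl (hb hli)) (not_le.2 hc)
  have h1 : (Set.Ioi i).ncard = L - 1 - i.val := by
    rw [← Finset.coe_Ioi, Set.ncard_coe_finset, Fin.card_Ioi]
  have := Set.ncard_le_ncard hsub (Set.toFinite _)
  have hi := i.isLt
  omega

lemma mem_A {a b : Fin L → ℝ} {n : ℕ} {t : ℝ} :
    t ∈ AgeqPhi L a b n ↔
      (0 ≤ t ∧ t ≤ 1) ∧ n ≤ {l : Fin L | t ≤ b l}.ncard + {l : Fin L | a l ≤ t}.ncard := by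
  unfold AgeqPhi PhiFn
  simp only [Set.mem_setOf_eq, Set.mem_Icc]
  constructor
  · rintro ⟨⟨h0, h1⟩, hn, -⟩
    refine ⟨⟨h0, h1⟩, ?_⟩
    have e1 : {l : Fin L | 0 ≤ t ∧ t ≤ b l} = {l : Fin L | t ≤ b l} := by
      ext l; simp [h0]
    have e2 : {l : Fin L | a l ≤ t ∧ t ≤ 1} = {l : Fin L | a l ≤ t} := by
      ext l; simp [h1]
    rw [e1, e2] at hn; exact hn
  · rintro ⟨⟨h0, h1⟩, hn⟩
    have e1 : {l : Fin L | 0 ≤ t ∧ t ≤ b l} = {l : Fin L | t ≤ b l} := by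
      ext l; simp [h0]
    have e2 : {l : Fin L | a l ≤ t ∧ t ≤ 1} = {l : Fin L | a l ≤ t} := by
      ext l; simp [h1]
    rw [e1, e2]
    refine ⟨⟨h0, h1⟩, hn, ?_⟩
    have := ncard_le_L {l : Fin L | t ≤ b l}
    have := ncard_le_L {l : Fin L | a l ≤ t}
    omega

/-- ℕ-indexed version of `a` (value 0 out of range). -/
noncomputable def aN (a : Fin L → ℝ) (m : ℕ) : ℝ := if h : m < L then a ⟨m, h⟩ else 0

lemma aN_eq {a : Fin L → ℝ} {m : ℕ} (h : m < L) : aN a m = a ⟨m, h⟩ := dif_pos h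

lemma aN_app {a : Fin L → ℝ} (i : Fin L) : aN a i.val = a i := by
  rw [aN_eq i.isLt]

lemma aN_mono {a : Fin L → ℝ} (ha : Monotone a) {m m' : ℕ} (h : m ≤ m') (h' : m' < L) :
    aN a m ≤ aN a m' := by
  rw [aN_eq (lt_of_le_of_lt h h'), aN_eq h']
  exact ha h

lemma aN_mem {a : Fin L → ℝ} (haI : ∀ l, a l ∈ Set.Icc (0 : ℝ) 1) {m : ℕ} (h : m < L) :
    0 ≤ aN a m ∧ aN a m ≤ 1 := by
  rw [aN_eq h]; exact ⟨(haI _).1, (haI _).2⟩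

lemma aN_lower {a : Fin L → ℝ} (ha : Monotone a) {m : ℕ} {t : ℝ} (hm : m < L)
    (h : aN a m ≤ t) : m + 1 ≤ {l : Fin L | a l ≤ t}.ncard := by
  rw [aN_eq hm] at h
  exact cA_lower ha ⟨m, hm⟩ h

lemma aN_upper {a : Fin L → ℝ} (ha : Monotone a) {m : ℕ} {t : ℝ} (hm : m < L)
    (h : m + 1 ≤ {l : Fin L | a l ≤ t}.ncard) : aN a m ≤ t := by
  rw [aN_eq hm]
  exact cA_upper ha ⟨m, hm⟩ h

lemma bN_lower {b : Fin L → ℝ} (hb : Monotone b) {m : ℕ} {t : ℝ} (hm : m < L)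
    (h : t ≤ aN b m) : L - m ≤ {l : Fin L | t ≤ b l}.ncard := by
  rw [aN_eq hm] at h
  exact cB_lower hb ⟨m, hm⟩ h

lemma bN_upper {b : Fin L → ℝ} (hb : Monotone b) {m : ℕ} {t : ℝ} (hm : m < L)
    (h : L - m ≤ {l : Fin L | t ≤ b l}.ncard) : t ≤ aN b m := by
  rw [aN_eq hm]
  exact cB_upper hb ⟨m, hm⟩ h

section Decomp

variable {a b : Fin L → ℝ} (ha : Monotone a) (hb : Monotone b)
  (haI : ∀ l, a l ∈ Set.Icc (0 : ℝ) 1) (hbI : ∀ l, b l ∈ Set.Icc (0 : ℝ) 1)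

include ha hb haI hbI

lemma decomp_le {n : ℕ} (hn1 : 1 ≤ n) (hnL : n ≤ L) :
    AgeqPhi L a b n =
      (Set.Icc (aN a (n - 1)) 1 ∪ Set.Icc 0 (aN b (L - n))) ∪
        ⋃ i : Fin (n - 1), Set.Icc (aN a i.val) (aN b (L - n + 1 + i.val)) := by
  ext t
  simp only [Set.mem_union, Set.mem_iUnion, Set.mem_Icc, mem_A]
  constructor
  · rintro ⟨⟨h0, h1⟩, hn⟩
    set c := {l : Fin L | a l ≤ t}.ncard with hc
    by_cases hcn : n ≤ c
    · exact Or.inl (Or.inl ⟨aN_upper ha (by omega) (by omega), h1⟩)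
    · push_neg at hcn
      by_cases hc0 : c = 0
      · exact Or.inl (Or.inr ⟨h0, bN_upper hb (by omega) (by omega)⟩)
      · refine Or.inr ⟨⟨c - 1, by omega⟩, ?_, ?_⟩ <;> simp only [Fin.val_mk]
        · exact aN_upper ha (by omega) (by omega)
        · refine bN_upper hb (by omega) ?_
          have e : L - (L - n + 1 + (c - 1)) = n - c := by omega
          rw [e]; omega
  · intro h
    rcases h with (⟨hat, h1⟩ | ⟨h0, htb⟩) | ⟨i, hat, htb⟩
    · have h0 : (0:ℝ) ≤ t := le_trans (aN_mem haI (by omega)).1 hat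
      have hcA := aN_lower ha (by omega : n - 1 < L) hat
      exact ⟨⟨h0, h1⟩, by omega⟩
    · have h1 : t ≤ 1 := le_trans htb (aN_mem hbI (by omega)).2
      have hcB := bN_lower hb (by omega : L - n < L) htb
      exact ⟨⟨h0, h1⟩, by omega⟩
    · have hi := i.isLt
      have h0 : (0:ℝ) ≤ t := le_trans (aN_mem haI (by omega)).1 hat
      have h1 : t ≤ 1 := le_trans htb (aN_mem hbI (by omega)).2
      have hcA := aN_lower ha (by omega : i.val < L) hat
      have hcB := bN_lower hb (by omega : L - n + 1 + i.val < L) htb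
      exact ⟨⟨h0, h1⟩, by omega⟩

lemma decomp_gt {n : ℕ} (hnL : L < n) (hn2 : n ≤ 2 * L) :
    AgeqPhi L a b n =
      ⋃ i : Fin (2 * L - n + 1), Set.Icc (aN a (n - L - 1 + i.val)) (aN b i.val) := by
  ext t
  simp only [Set.mem_iUnion, Set.mem_Icc, mem_A]
  constructor
  · rintro ⟨⟨h0, h1⟩, hn⟩
    set c := {l : Fin L | a l ≤ t}.ncard with hc
    have hcL : c ≤ L := ncard_le_L _
    have hcBL : {l : Fin L | t ≤ b l}.ncard ≤ L := ncard_le_L _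
    have hc1 : n - L ≤ c := by omega
    refine ⟨⟨c + L - n, by omega⟩, ?_, ?_⟩ <;> simp only [Fin.val_mk]
    · exact aN_upper ha (by omega) (by omega)
    · refine bN_upper hb (by omega) ?_
      have e : L - (c + L - n) = n - c := by omega
      rw [e]; omega
  · rintro ⟨i, hat, htb⟩
    have hi := i.isLt
    have h0 : (0:ℝ) ≤ t := le_trans (aN_mem haI (by omega)).1 hat
    have h1 : t ≤ 1 := le_trans htb (aN_mem hbI (by omega)).2
    have hcA := aN_lower ha (by omega : n - L - 1 + i.val < L) hat
    have hcB := bN_lower hb (by omega : i.val < L) htb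
    exact ⟨⟨h0, h1⟩, by omega⟩

lemma decomp_L (hL : 0 < L) :
    AgeqPhi L a b (L + 1) = ⋃ i : Fin L, Set.Icc (aN a i.val) (aN b i.val) := by
  rw [decomp_gt ha hb haI hbI (by omega) (by omega)]
  have hT : 2 * L - (L + 1) + 1 = L := by omega
  apply Set.Subset.antisymm
  · refine Set.iUnion_subset fun i t ht => ?_
    have hi := i.isLt
    refine Set.mem_iUnion.2 ⟨⟨i.val, by omega⟩, ?_⟩
    have e : L + 1 - L - 1 + i.val = i.val := by omega
    rw [e] at ht
    exact ht
  · refine Set.iUnion_subset fun i t ht => ?_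
    have hi := i.isLt
    refine Set.mem_iUnion.2 ⟨⟨i.val, by omega⟩, ?_⟩
    have e : L + 1 - L - 1 + (⟨i.val, by omega⟩ : Fin (2 * L - (L + 1) + 1)).val = i.val := by
      simp only [Fin.val_mk]; omega
    rw [e]
    exact ht

end Decomp

section PartOne

variable {a b : Fin L → ℝ} (ha : Monotone a) (hb : Monotone b)
  (haI : ∀ l, a l ∈ Set.Icc (0 : ℝ) 1) (hbI : ∀ l, b l ∈ Set.Icc (0 : ℝ) 1)

include ha hb haI hbI

lemma P_full {n : ℕ} (hn1 : 1 ≤ n) (hnL : n ≤ L) (hfull : aN a (n - 1) ≤ aN b (L - n)) :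
    AgeqPhi L a b n = ⋃ _i : Fin 1, CyclicInterval 0 1 := by
  rw [Set.iUnion_const, Cyc_Icc zero_le_one, decomp_le ha hb haI hbI hn1 hnL]
  apply Set.Subset.antisymm
  · apply Set.union_subset
    · apply Set.union_subset
      · exact fun t ht => ⟨le_trans (aN_mem haI (by omega)).1 ht.1, ht.2⟩
      · exact fun t ht => ⟨ht.1, le_trans ht.2 (aN_mem hbI (by omega)).2⟩
    · refine Set.iUnion_subset fun i t ht => ?_
      have hi := i.isLt
      exact ⟨le_trans (aN_mem haI (by omega)).1 ht.1,
        le_trans ht.2 (aN_mem hbI (by omega)).2⟩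
  · intro t ht
    by_cases htb : t ≤ aN b (L - n)
    · exact Or.inl (Or.inr ⟨ht.1, htb⟩)
    · exact Or.inl (Or.inl ⟨le_trans hfull (le_of_not_ge htb), ht.2⟩)

lemma P_le {n : ℕ} (hn1 : 1 ≤ n) (hnL : n ≤ L) (hfull : ¬ aN a (n - 1) ≤ aN b (L - n)) :
    ∃ x y : Fin n → ℝ, AgeqPhi L a b n = ⋃ i, CyclicInterval (x i) (y i) := by
  classical
  set x : Fin n → ℝ := fun i => if i.val = 0 then aN a (n - 1) else
      (if aN a (i.val - 1) ≤ aN b (L - n + i.val) then aN a (i.val - 1) else 0) with hx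
  set y : Fin n → ℝ := fun i => if i.val = 0 then aN b (L - n) else
      (if aN a (i.val - 1) ≤ aN b (L - n + i.val) then aN b (L - n + i.val) else 0) with hy
  have hx0 : ∀ i : Fin n, i.val = 0 → x i = aN a (n - 1) := fun i h => by
    rw [hx]; exact if_pos h
  have hy0 : ∀ i : Fin n, i.val = 0 → y i = aN b (L - n) := fun i h => by
    rw [hy]; exact if_pos h
  have hxp : ∀ i : Fin n, i.val ≠ 0 → aN a (i.val - 1) ≤ aN b (L - n + i.val) →
      x i = aN a (i.val - 1) := fun i h h' => by
    rw [hx]; simp only [if_neg h, if_pos h']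
  have hyp : ∀ i : Fin n, i.val ≠ 0 → aN a (i.val - 1) ≤ aN b (L - n + i.val) →
      y i = aN b (L - n + i.val) := fun i h h' => by
    rw [hy]; simp only [if_neg h, if_pos h']
  have hxn : ∀ i : Fin n, i.val ≠ 0 → ¬ aN a (i.val - 1) ≤ aN b (L - n + i.val) →
      x i = 0 := fun i h h' => by
    rw [hx]; simp only [if_neg h, if_neg h']
  have hyn : ∀ i : Fin n, i.val ≠ 0 → ¬ aN a (i.val - 1) ≤ aN b (L - n + i.val) →
      y i = 0 := fun i h h' => by
    rw [hy]; simp only [if_neg h, if_neg h']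
  refine ⟨x, y, ?_⟩
  rw [decomp_le ha hb haI hbI hn1 hnL]
  apply Set.Subset.antisymm
  · intro t ht
    rcases ht with (hw | hm)
    · refine Set.mem_iUnion.2 ⟨⟨0, by omega⟩, ?_⟩
      rw [hx0 _ rfl, hy0 _ rfl, Cyc_wrap hfull]
      exact hw
    · rw [Set.mem_iUnion] at hm
      obtain ⟨i, hm⟩ := hm
      have hi := i.isLt
      rw [Set.mem_Icc] at hm
      have hab : aN a i.val ≤ aN b (L - n + 1 + i.val) := le_trans hm.1 hm.2
      refine Set.mem_iUnion.2 ⟨⟨i.val + 1, by omega⟩, ?_⟩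
      set j : Fin n := ⟨i.val + 1, by omega⟩ with hj
      have hjv : j.val = i.val + 1 := rfl
      have hj0 : j.val ≠ 0 := by omega
      have e1 : j.val - 1 = i.val := by omega
      have e2 : L - n + j.val = L - n + 1 + i.val := by omega
      have hab' : aN a (j.val - 1) ≤ aN b (L - n + j.val) := by rw [e1, e2]; exact hab
      rw [hxp j hj0 hab', hyp j hj0 hab', Cyc_Icc hab', e1, e2]
      exact hm
  · refine Set.iUnion_subset fun i t ht => ?_
    by_cases hi0 : i.val = 0
    · rw [hx0 _ hi0, hy0 _ hi0, Cyc_wrap hfull] at ht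
      exact Or.inl ht
    · have hi := i.isLt
      have hi1 : 1 ≤ i.val := Nat.one_le_iff_ne_zero.2 hi0
      by_cases hab : aN a (i.val - 1) ≤ aN b (L - n + i.val)
      · rw [hxp _ hi0 hab, hyp _ hi0 hab, Cyc_Icc hab] at ht
        refine Or.inr (Set.mem_iUnion.2 ⟨⟨i.val - 1, by omega⟩, ?_⟩)
        simp only [Fin.val_mk]
        have e2 : L - n + 1 + (i.val - 1) = L - n + i.val := by omega
        rw [e2]
        exact ht
      · rw [hxn _ hi0 hab, hyn _ hi0 hab, Cyc_pt, Set.mem_singleton_iff] at ht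
        subst ht
        exact Or.inl (Or.inr ⟨le_rfl, (aN_mem hbI (by omega)).1⟩)

lemma P_gt {n : ℕ} (hnL : L < n) (hn2 : n ≤ 2 * L) :
    ∃ k ≤ 2 * L - n + 1, ∃ x y : Fin k → ℝ,
      AgeqPhi L a b n = ⋃ i, CyclicInterval (x i) (y i) := by
  classical
  by_cases hne : ∃ i : Fin (2 * L - n + 1), aN a (n - L - 1 + i.val) ≤ aN b i.val
  · obtain ⟨i0, hi0⟩ := hne
    have ht0A : aN a (n - L - 1 + i0.val) ∈ AgeqPhi L a b n := by
      rw [decomp_gt ha hb haI hbI hnL hn2]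
      exact Set.mem_iUnion.2 ⟨i0, le_rfl, hi0⟩
    set t0 : ℝ := aN a (n - L - 1 + i0.val) with ht0
    set x : Fin (2 * L - n + 1) → ℝ := fun i =>
      if aN a (n - L - 1 + i.val) ≤ aN b i.val then aN a (n - L - 1 + i.val) else t0 with hx
    set y : Fin (2 * L - n + 1) → ℝ := fun i =>
      if aN a (n - L - 1 + i.val) ≤ aN b i.val then aN b i.val else t0 with hy
    have hxp : ∀ i, aN a (n - L - 1 + i.val) ≤ aN b i.val → x i = aN a (n - L - 1 + i.val) :=
      fun i h => by rw [hx]; exact if_pos h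
    have hyp : ∀ i, aN a (n - L - 1 + i.val) ≤ aN b i.val → y i = aN b i.val :=
      fun i h => by rw [hy]; exact if_pos h
    have hxn : ∀ i, ¬ aN a (n - L - 1 + i.val) ≤ aN b i.val → x i = t0 :=
      fun i h => by rw [hx]; exact if_neg h
    have hyn : ∀ i, ¬ aN a (n - L - 1 + i.val) ≤ aN b i.val → y i = t0 :=
      fun i h => by rw [hy]; exact if_neg h
    refine ⟨2 * L - n + 1, le_rfl, x, y, ?_⟩
    apply Set.Subset.antisymm
    · rw [decomp_gt ha hb haI hbI hnL hn2]
      refine Set.iUnion_subset fun i t ht => ?_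
      rw [Set.mem_Icc] at ht
      have hab : aN a (n - L - 1 + i.val) ≤ aN b i.val := le_trans ht.1 ht.2
      refine Set.mem_iUnion.2 ⟨i, ?_⟩
      rw [hxp i hab, hyp i hab, Cyc_Icc hab]
      exact ht
    · refine Set.iUnion_subset fun i t ht => ?_
      by_cases hab : aN a (n - L - 1 + i.val) ≤ aN b i.val
      · rw [hxp i hab, hyp i hab, Cyc_Icc hab] at ht
        rw [decomp_gt ha hb haI hbI hnL hn2]
        exact Set.mem_iUnion.2 ⟨i, ht⟩
      · rw [hxn i hab, hyn i hab, Cyc_pt, Set.mem_singleton_iff] at ht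
        subst ht
        exact ht0A
  · push_neg at hne
    refine ⟨0, by omega, fun _ => 0, fun _ => 0, ?_⟩
    rw [decomp_gt ha hb haI hbI hnL hn2]
    have h1 : (⋃ i : Fin (2 * L - n + 1),
        Set.Icc (aN a (n - L - 1 + i.val)) (aN b i.val)) = ∅ :=
      Set.iUnion_eq_empty.2 fun i => Set.Icc_eq_empty (not_le.2 (hne i))
    rw [h1, Set.iUnion_of_empty]

end PartOne

section PartTwo

variable {a b : Fin L → ℝ} (ha : Monotone a) (hb : Monotone b)
  (haI : ∀ l, a l ∈ Set.Icc (0 : ℝ) 1) (hbI : ∀ l, b l ∈ Set.Icc (0 : ℝ) 1)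

include ha hb haI hbI

lemma decomp_L_eq (hL : 1 ≤ L) :
    AgeqPhi L a b L =
      (Set.Icc (aN a (L - 1)) 1 ∪ Set.Icc 0 (aN b 0)) ∪
        ⋃ i : Fin (L - 1), Set.Icc (aN a i.val) (aN b (1 + i.val)) := by
  have h := decomp_le ha hb haI hbI hL le_rfl
  simpa only [Nat.sub_self, Nat.zero_add] using h

lemma subL_wl (hL : 1 ≤ L) : Set.Icc (aN a (L - 1)) 1 ⊆ AgeqPhi L a b L := by
  rw [decomp_L_eq ha hb haI hbI hL]
  exact fun t ht => Or.inl (Or.inl ht)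

lemma subL_wr (hL : 1 ≤ L) : Set.Icc 0 (aN b 0) ⊆ AgeqPhi L a b L := by
  rw [decomp_L_eq ha hb haI hbI hL]
  exact fun t ht => Or.inl (Or.inr ht)

lemma subL_mid (hL : 1 ≤ L) {j : ℕ} (hj : j < L - 1) :
    Set.Icc (aN a j) (aN b (1 + j)) ⊆ AgeqPhi L a b L := by
  rw [decomp_L_eq ha hb haI hbI hL]
  exact fun t ht => Or.inr (Set.mem_iUnion.2 ⟨⟨j, hj⟩, ht⟩)

lemma subL1 (hL : 1 ≤ L) {j : ℕ} (hj : j < L) :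
    Set.Icc (aN a j) (aN b j) ⊆ AgeqPhi L a b (L + 1) := by
  rw [decomp_L ha hb haI hbI hL]
  exact fun t ht => Set.mem_iUnion.2 ⟨⟨j, hj⟩, ht⟩

lemma claim2a (hL2 : 2 ≤ L) (hfull : ¬ aN a (L - 1) ≤ aN b 0)
    (hA : ∀ k < L, ∀ x y : Fin k → ℝ,
      AgeqPhi L a b L ≠ ⋃ i, CyclicInterval (x i) (y i)) :
    ∀ m, m + 1 < L → aN a m ≤ aN b (m + 1) := by
  intro m hm
  by_contra hab
  classical
  set jf : ℕ → ℕ := fun s => if s ≤ m then s - 1 else s with hjf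
  have hjf1 : ∀ s, s ≤ m → jf s = s - 1 := fun s h => if_pos h
  have hjf2 : ∀ s, ¬ s ≤ m → jf s = s := fun s h => if_neg h
  set x : Fin (L - 1) → ℝ := fun s => if s.val = 0 then aN a (L - 1) else
      (if aN a (jf s.val) ≤ aN b (1 + jf s.val) then aN a (jf s.val) else 0) with hx
  set y : Fin (L - 1) → ℝ := fun s => if s.val = 0 then aN b 0 else
      (if aN a (jf s.val) ≤ aN b (1 + jf s.val) then aN b (1 + jf s.val) else 0) with hy
  have hx0 : ∀ s : Fin (L - 1), s.val = 0 → x s = aN a (L - 1) := fun s h => by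
    rw [hx]; exact if_pos h
  have hy0 : ∀ s : Fin (L - 1), s.val = 0 → y s = aN b 0 := fun s h => by
    rw [hy]; exact if_pos h
  have hxp : ∀ s : Fin (L - 1), s.val ≠ 0 → aN a (jf s.val) ≤ aN b (1 + jf s.val) →
      x s = aN a (jf s.val) := fun s h h' => by rw [hx]; simp only [if_neg h, if_pos h']
  have hyp : ∀ s : Fin (L - 1), s.val ≠ 0 → aN a (jf s.val) ≤ aN b (1 + jf s.val) →
      y s = aN b (1 + jf s.val) := fun s h h' => by rw [hy]; simp only [if_neg h, if_pos h']
  have hxn : ∀ s : Fin (L - 1), s.val ≠ 0 → ¬ aN a (jf s.val) ≤ aN b (1 + jf s.val) →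
      x s = 0 := fun s h h' => by rw [hx]; simp only [if_neg h, if_neg h']
  have hyn : ∀ s : Fin (L - 1), s.val ≠ 0 → ¬ aN a (jf s.val) ≤ aN b (1 + jf s.val) →
      y s = 0 := fun s h h' => by rw [hy]; simp only [if_neg h, if_neg h']
  refine hA (L - 1) (by omega) x y ?_
  apply Set.Subset.antisymm
  · rw [decomp_L_eq ha hb haI hbI (by omega)]
    rintro t ((hw | hw) | hmid)
    · refine Set.mem_iUnion.2 ⟨⟨0, by omega⟩, ?_⟩
      rw [hx0 _ rfl, hy0 _ rfl, Cyc_wrap hfull]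
      exact Or.inl hw
    · refine Set.mem_iUnion.2 ⟨⟨0, by omega⟩, ?_⟩
      rw [hx0 _ rfl, hy0 _ rfl, Cyc_wrap hfull]
      exact Or.inr hw
    · rw [Set.mem_iUnion] at hmid
      obtain ⟨i, hi⟩ := hmid
      have hiL := i.isLt
      rw [Set.mem_Icc] at hi
      have hnem : aN a i.val ≤ aN b (1 + i.val) := le_trans hi.1 hi.2
      have hne : i.val ≠ m := by
        intro h
        rw [h] at hnem
        exact hab (by rwa [Nat.add_comm] at hnem)
      by_cases hlt : i.val < m
      · refine Set.mem_iUnion.2 ⟨⟨i.val + 1, by omega⟩, ?_⟩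
        set s : Fin (L - 1) := ⟨i.val + 1, by omega⟩ with hs
        have hsv : s.val = i.val + 1 := rfl
        have hs0 : s.val ≠ 0 := by omega
        have hj : jf s.val = i.val := by rw [hjf1 _ (by omega)]; omega
        have hnem' : aN a (jf s.val) ≤ aN b (1 + jf s.val) := by rw [hj]; exact hnem
        rw [hxp s hs0 hnem', hyp s hs0 hnem', Cyc_Icc hnem', hj]
        exact hi
      · refine Set.mem_iUnion.2 ⟨⟨i.val, by omega⟩, ?_⟩
        set s : Fin (L - 1) := ⟨i.val, by omega⟩ with hs
        have hsv : s.val = i.val := rfl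
        have hs0 : s.val ≠ 0 := by omega
        have hj : jf s.val = i.val := by rw [hjf2 _ (by omega)]
        have hnem' : aN a (jf s.val) ≤ aN b (1 + jf s.val) := by rw [hj]; exact hnem
        rw [hxp s hs0 hnem', hyp s hs0 hnem', Cyc_Icc hnem', hj]
        exact hi
  · refine Set.iUnion_subset fun s t ht => ?_
    by_cases hs0 : s.val = 0
    · rw [hx0 _ hs0, hy0 _ hs0, Cyc_wrap hfull] at ht
      rcases ht with h | h
      · exact subL_wl ha hb haI hbI (by omega) h
      · exact subL_wr ha hb haI hbI (by omega) h
    · have hsL := s.isLt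
      have hjlt : jf s.val < L - 1 := by
        by_cases h : s.val ≤ m
        · rw [hjf1 _ h]; omega
        · rw [hjf2 _ h]; omega
      by_cases hcond : aN a (jf s.val) ≤ aN b (1 + jf s.val)
      · rw [hxp s hs0 hcond, hyp s hs0 hcond, Cyc_Icc hcond] at ht
        exact subL_mid ha hb haI hbI (by omega) hjlt ht
      · rw [hxn s hs0 hcond, hyn s hs0 hcond, Cyc_pt, Set.mem_singleton_iff] at ht
        subst ht
        exact subL_wr ha hb haI hbI (by omega) ⟨le_rfl, (aN_mem hbI (by omega)).1⟩

lemma claim2b0 (hL2 : 2 ≤ L)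
    (hA : ∀ k < L, ∀ x y : Fin k → ℝ,
      AgeqPhi L a b L ≠ ⋃ i, CyclicInterval (x i) (y i))
    (hab : aN a 0 ≤ aN b 0) : False := by
  classical
  have hsub01 : Set.Icc (0:ℝ) (aN b 1) ⊆ AgeqPhi L a b L := by
    intro t ht
    rw [Set.mem_Icc] at ht
    by_cases h1 : t ≤ aN b 0
    · exact subL_wr ha hb haI hbI (by omega) ⟨ht.1, h1⟩
    · refine subL_mid ha hb haI hbI (by omega) (by omega : 0 < L - 1) ?_
      exact ⟨le_trans hab (le_of_not_ge h1), ht.2⟩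
  by_cases hW : aN a (L - 1) ≤ aN b 1
  · refine hA 1 (by omega) (fun _ => 0) (fun _ => 1) ?_
    rw [Set.iUnion_const, Cyc_Icc zero_le_one]
    apply Set.Subset.antisymm
    · intro t ht
      exact Set.mem_Icc.2 (mem_A.1 ht).1
    · intro t ht
      rw [Set.mem_Icc] at ht
      by_cases h2 : t ≤ aN b 1
      · exact hsub01 ⟨ht.1, h2⟩
      · exact subL_wl ha hb haI hbI (by omega) ⟨le_trans hW (le_of_not_ge h2), ht.2⟩
  · set x : Fin (L - 1) → ℝ := fun s => if s.val = 0 then aN a (L - 1) else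
        (if aN a s.val ≤ aN b (1 + s.val) then aN a s.val else 0) with hx
    set y : Fin (L - 1) → ℝ := fun s => if s.val = 0 then aN b 1 else
        (if aN a s.val ≤ aN b (1 + s.val) then aN b (1 + s.val) else 0) with hy
    have hx0 : ∀ s : Fin (L - 1), s.val = 0 → x s = aN a (L - 1) := fun s h => by
      rw [hx]; exact if_pos h
    have hy0 : ∀ s : Fin (L - 1), s.val = 0 → y s = aN b 1 := fun s h => by
      rw [hy]; exact if_pos h
    have hxp : ∀ s : Fin (L - 1), s.val ≠ 0 → aN a s.val ≤ aN b (1 + s.val) →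
        x s = aN a s.val := fun s h h' => by rw [hx]; simp only [if_neg h, if_pos h']
    have hyp : ∀ s : Fin (L - 1), s.val ≠ 0 → aN a s.val ≤ aN b (1 + s.val) →
        y s = aN b (1 + s.val) := fun s h h' => by rw [hy]; simp only [if_neg h, if_pos h']
    have hxn : ∀ s : Fin (L - 1), s.val ≠ 0 → ¬ aN a s.val ≤ aN b (1 + s.val) →
        x s = 0 := fun s h h' => by rw [hx]; simp only [if_neg h, if_neg h']
    have hyn : ∀ s : Fin (L - 1), s.val ≠ 0 → ¬ aN a s.val ≤ aN b (1 + s.val) →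
        y s = 0 := fun s h h' => by rw [hy]; simp only [if_neg h, if_neg h']
    refine hA (L - 1) (by omega) x y ?_
    apply Set.Subset.antisymm
    · rw [decomp_L_eq ha hb haI hbI (by omega)]
      rintro t ((hw | hw) | hmid)
      · refine Set.mem_iUnion.2 ⟨⟨0, by omega⟩, ?_⟩
        rw [hx0 _ rfl, hy0 _ rfl, Cyc_wrap hW]
        exact Or.inl hw
      · refine Set.mem_iUnion.2 ⟨⟨0, by omega⟩, ?_⟩
        rw [hx0 _ rfl, hy0 _ rfl, Cyc_wrap hW]
        rw [Set.mem_Icc] at hw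
        exact Or.inr ⟨hw.1, le_trans hw.2 (aN_mono hb (by omega) (by omega))⟩
      · rw [Set.mem_iUnion] at hmid
        obtain ⟨i, hi⟩ := hmid
        have hiL := i.isLt
        rw [Set.mem_Icc] at hi
        by_cases hi0 : i.val = 0
        · rw [hi0] at hi
          refine Set.mem_iUnion.2 ⟨⟨0, by omega⟩, ?_⟩
          rw [hx0 _ rfl, hy0 _ rfl, Cyc_wrap hW]
          exact Or.inr ⟨le_trans (aN_mem haI (by omega)).1 hi.1, hi.2⟩
        · have hnem : aN a i.val ≤ aN b (1 + i.val) := le_trans hi.1 hi.2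
          refine Set.mem_iUnion.2 ⟨⟨i.val, by omega⟩, ?_⟩
          set s : Fin (L - 1) := ⟨i.val, by omega⟩ with hs
          rw [hxp s hi0 hnem, hyp s hi0 hnem, Cyc_Icc hnem]
          exact Set.mem_Icc.2 hi
    · refine Set.iUnion_subset fun s t ht => ?_
      by_cases hs0 : s.val = 0
      · rw [hx0 _ hs0, hy0 _ hs0, Cyc_wrap hW] at ht
        rcases ht with h | h
        · exact subL_wl ha hb haI hbI (by omega) h
        · exact hsub01 h
      · have hsL := s.isLt
        by_cases hcond : aN a s.val ≤ aN b (1 + s.val)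
        · rw [hxp s hs0 hcond, hyp s hs0 hcond, Cyc_Icc hcond] at ht
          exact subL_mid ha hb haI hbI (by omega) (by omega) ht
        · rw [hxn s hs0 hcond, hyn s hs0 hcond, Cyc_pt, Set.mem_singleton_iff] at ht
          subst ht
          exact subL_wr ha hb haI hbI (by omega) ⟨le_rfl, (aN_mem hbI (by omega)).1⟩

lemma claim2bL (hL2 : 2 ≤ L)
    (hA : ∀ k < L, ∀ x y : Fin k → ℝ,
      AgeqPhi L a b L ≠ ⋃ i, CyclicInterval (x i) (y i))
    (hab : aN a (L - 1) ≤ aN b (L - 1)) : False := by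
  classical
  have hsub2 : Set.Icc (aN a (L - 2)) 1 ⊆ AgeqPhi L a b L := by
    intro t ht
    rw [Set.mem_Icc] at ht
    by_cases h2 : t ≤ aN b (L - 1)
    · refine subL_mid ha hb haI hbI (by omega) (by omega : L - 2 < L - 1) ?_
      have e : 1 + (L - 2) = L - 1 := by omega
      rw [Set.mem_Icc, e]
      exact ⟨ht.1, h2⟩
    · exact subL_wl ha hb haI hbI (by omega) ⟨le_trans hab (le_of_not_ge h2), ht.2⟩
  by_cases hW : aN a (L - 2) ≤ aN b 0
  · refine hA 1 (by omega) (fun _ => 0) (fun _ => 1) ?_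
    rw [Set.iUnion_const, Cyc_Icc zero_le_one]
    apply Set.Subset.antisymm
    · intro t ht
      exact Set.mem_Icc.2 (mem_A.1 ht).1
    · intro t ht
      rw [Set.mem_Icc] at ht
      by_cases h1 : t ≤ aN b 0
      · exact subL_wr ha hb haI hbI (by omega) ⟨ht.1, h1⟩
      · exact hsub2 ⟨le_trans hW (le_of_not_ge h1), ht.2⟩
  · set x : Fin (L - 1) → ℝ := fun s => if s.val = 0 then aN a (L - 2) else
        (if aN a (s.val - 1) ≤ aN b (1 + (s.val - 1)) then aN a (s.val - 1) else 0) with hx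
    set y : Fin (L - 1) → ℝ := fun s => if s.val = 0 then aN b 0 else
        (if aN a (s.val - 1) ≤ aN b (1 + (s.val - 1)) then aN b (1 + (s.val - 1)) else 0) with hy
    have hx0 : ∀ s : Fin (L - 1), s.val = 0 → x s = aN a (L - 2) := fun s h => by
      rw [hx]; exact if_pos h
    have hy0 : ∀ s : Fin (L - 1), s.val = 0 → y s = aN b 0 := fun s h => by
      rw [hy]; exact if_pos h
    have hxp : ∀ s : Fin (L - 1), s.val ≠ 0 → aN a (s.val - 1) ≤ aN b (1 + (s.val - 1)) →
        x s = aN a (s.val - 1) := fun s h h' => by rw [hx]; simp only [if_neg h, if_pos h']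
    have hyp : ∀ s : Fin (L - 1), s.val ≠ 0 → aN a (s.val - 1) ≤ aN b (1 + (s.val - 1)) →
        y s = aN b (1 + (s.val - 1)) := fun s h h' => by rw [hy]; simp only [if_neg h, if_pos h']
    have hxn : ∀ s : Fin (L - 1), s.val ≠ 0 → ¬ aN a (s.val - 1) ≤ aN b (1 + (s.val - 1)) →
        x s = 0 := fun s h h' => by rw [hx]; simp only [if_neg h, if_neg h']
    have hyn : ∀ s : Fin (L - 1), s.val ≠ 0 → ¬ aN a (s.val - 1) ≤ aN b (1 + (s.val - 1)) →
        y s = 0 := fun s h h' => by rw [hy]; simp only [if_neg h, if_neg h']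
    refine hA (L - 1) (by omega) x y ?_
    apply Set.Subset.antisymm
    · rw [decomp_L_eq ha hb haI hbI (by omega)]
      rintro t ((hw | hw) | hmid)
      · refine Set.mem_iUnion.2 ⟨⟨0, by omega⟩, ?_⟩
        rw [hx0 _ rfl, hy0 _ rfl, Cyc_wrap hW]
        rw [Set.mem_Icc] at hw
        exact Or.inl ⟨le_trans (aN_mono ha (by omega) (by omega)) hw.1, hw.2⟩
      · refine Set.mem_iUnion.2 ⟨⟨0, by omega⟩, ?_⟩
        rw [hx0 _ rfl, hy0 _ rfl, Cyc_wrap hW]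
        exact Or.inr hw
      · rw [Set.mem_iUnion] at hmid
        obtain ⟨i, hi⟩ := hmid
        have hiL := i.isLt
        rw [Set.mem_Icc] at hi
        by_cases hi2 : i.val = L - 2
        · rw [hi2] at hi
          refine Set.mem_iUnion.2 ⟨⟨0, by omega⟩, ?_⟩
          rw [hx0 _ rfl, hy0 _ rfl, Cyc_wrap hW]
          exact Or.inl ⟨hi.1, le_trans hi.2 (aN_mem hbI (by omega)).2⟩
        · have hnem : aN a i.val ≤ aN b (1 + i.val) := le_trans hi.1 hi.2
          refine Set.mem_iUnion.2 ⟨⟨i.val + 1, by omega⟩, ?_⟩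
          set s : Fin (L - 1) := ⟨i.val + 1, by omega⟩ with hs
          have hsv : s.val = i.val + 1 := rfl
          have hs0 : s.val ≠ 0 := by omega
          have hj : s.val - 1 = i.val := by omega
          have hnem' : aN a (s.val - 1) ≤ aN b (1 + (s.val - 1)) := by rw [hj]; exact hnem
          rw [hxp s hs0 hnem', hyp s hs0 hnem', Cyc_Icc hnem', hj]
          exact Set.mem_Icc.2 hi
    · refine Set.iUnion_subset fun s t ht => ?_
      by_cases hs0 : s.val = 0
      · rw [hx0 _ hs0, hy0 _ hs0, Cyc_wrap hW] at ht
        rcases ht with h | h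
        · exact hsub2 h
        · exact subL_wr ha hb haI hbI (by omega) h
      · have hsL := s.isLt
        by_cases hcond : aN a (s.val - 1) ≤ aN b (1 + (s.val - 1))
        · rw [hxp s hs0 hcond, hyp s hs0 hcond, Cyc_Icc hcond] at ht
          exact subL_mid ha hb haI hbI (by omega) (by omega : s.val - 1 < L - 1) ht
        · rw [hxn s hs0 hcond, hyn s hs0 hcond, Cyc_pt, Set.mem_singleton_iff] at ht
          subst ht
          exact subL_wr ha hb haI hbI (by omega) ⟨le_rfl, (aN_mem hbI (by omega)).1⟩

lemma claim2bmid (hfull : ¬ aN a (L - 1) ≤ aN b 0)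
    (hA : ∀ k < L, ∀ x y : Fin k → ℝ,
      AgeqPhi L a b L ≠ ⋃ i, CyclicInterval (x i) (y i))
    {m : ℕ} (hm0 : 0 < m) (hmL : m + 1 < L)
    (hab : aN a m ≤ aN b m) : False := by
  classical
  have hM : aN a (m - 1) ≤ aN b (m + 1) :=
    le_trans (aN_mono ha (by omega) (by omega))
      (le_trans hab (aN_mono hb (by omega) (by omega)))
  have hMsub : Set.Icc (aN a (m - 1)) (aN b (m + 1)) ⊆ AgeqPhi L a b L := by
    intro t ht
    rw [Set.mem_Icc] at ht
    by_cases h2 : t ≤ aN b m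
    · refine subL_mid ha hb haI hbI (by omega) (by omega : m - 1 < L - 1) ?_
      have e : 1 + (m - 1) = m := by omega
      rw [Set.mem_Icc, e]
      exact ⟨ht.1, h2⟩
    · refine subL_mid ha hb haI hbI (by omega) (by omega : m < L - 1) ?_
      have e : 1 + m = m + 1 := by omega
      rw [Set.mem_Icc, e]
      exact ⟨le_trans hab (le_of_not_ge h2), ht.2⟩
  set jf : ℕ → ℕ := fun s => if s ≤ m then s - 1 else s with hjf
  have hjf1 : ∀ s, s ≤ m → jf s = s - 1 := fun s h => if_pos h
  have hjf2 : ∀ s, ¬ s ≤ m → jf s = s := fun s h => if_neg h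
  set x : Fin (L - 1) → ℝ := fun s => if s.val = 0 then aN a (L - 1) else
      (if jf s.val + 1 = m then aN a (m - 1) else
        (if aN a (jf s.val) ≤ aN b (1 + jf s.val) then aN a (jf s.val) else 0)) with hx
  set y : Fin (L - 1) → ℝ := fun s => if s.val = 0 then aN b 0 else
      (if jf s.val + 1 = m then aN b (m + 1) else
        (if aN a (jf s.val) ≤ aN b (1 + jf s.val) then aN b (1 + jf s.val) else 0)) with hy
  have hx0 : ∀ s : Fin (L - 1), s.val = 0 → x s = aN a (L - 1) := fun s h => by
    rw [hx]; exact if_pos h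
  have hy0 : ∀ s : Fin (L - 1), s.val = 0 → y s = aN b 0 := fun s h => by
    rw [hy]; exact if_pos h
  have hxM : ∀ s : Fin (L - 1), s.val ≠ 0 → jf s.val + 1 = m → x s = aN a (m - 1) :=
    fun s h h' => by rw [hx]; simp only [if_neg h, if_pos h']
  have hyM : ∀ s : Fin (L - 1), s.val ≠ 0 → jf s.val + 1 = m → y s = aN b (m + 1) :=
    fun s h h' => by rw [hy]; simp only [if_neg h, if_pos h']
  have hxp : ∀ s : Fin (L - 1), s.val ≠ 0 → jf s.val + 1 ≠ m →
      aN a (jf s.val) ≤ aN b (1 + jf s.val) → x s = aN a (jf s.val) :=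
    fun s h h' h'' => by rw [hx]; simp only [if_neg h, if_neg h', if_pos h'']
  have hyp : ∀ s : Fin (L - 1), s.val ≠ 0 → jf s.val + 1 ≠ m →
      aN a (jf s.val) ≤ aN b (1 + jf s.val) → y s = aN b (1 + jf s.val) :=
    fun s h h' h'' => by rw [hy]; simp only [if_neg h, if_neg h', if_pos h'']
  have hxn : ∀ s : Fin (L - 1), s.val ≠ 0 → jf s.val + 1 ≠ m →
      ¬ aN a (jf s.val) ≤ aN b (1 + jf s.val) → x s = 0 :=
    fun s h h' h'' => by rw [hx]; simp only [if_neg h, if_neg h', if_neg h'']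
  have hyn : ∀ s : Fin (L - 1), s.val ≠ 0 → jf s.val + 1 ≠ m →
      ¬ aN a (jf s.val) ≤ aN b (1 + jf s.val) → y s = 0 :=
    fun s h h' h'' => by rw [hy]; simp only [if_neg h, if_neg h', if_neg h'']
  refine hA (L - 1) (by omega) x y ?_
  apply Set.Subset.antisymm
  · rw [decomp_L_eq ha hb haI hbI (by omega)]
    rintro t ((hw | hw) | hmid)
    · refine Set.mem_iUnion.2 ⟨⟨0, by omega⟩, ?_⟩
      rw [hx0 _ rfl, hy0 _ rfl, Cyc_wrap hfull]
      exact Or.inl hw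
    · refine Set.mem_iUnion.2 ⟨⟨0, by omega⟩, ?_⟩
      rw [hx0 _ rfl, hy0 _ rfl, Cyc_wrap hfull]
      exact Or.inr hw
    · rw [Set.mem_iUnion] at hmid
      obtain ⟨i, hi⟩ := hmid
      have hiL := i.isLt
      rw [Set.mem_Icc] at hi
      by_cases hiM : i.val = m - 1 ∨ i.val = m
      · refine Set.mem_iUnion.2 ⟨⟨m, by omega⟩, ?_⟩
        set s : Fin (L - 1) := ⟨m, by omega⟩ with hs
        have hsv : s.val = m := rfl
        have hs0 : s.val ≠ 0 := by omega
        have hjs : jf s.val = m - 1 := by rw [hsv, hjf1 _ le_rfl]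
        have hjsM : jf s.val + 1 = m := by omega
        rw [hxM s hs0 hjsM, hyM s hs0 hjsM, Cyc_Icc hM, Set.mem_Icc]
        rcases hiM with h | h
        · rw [h] at hi
          refine ⟨hi.1, le_trans hi.2 (aN_mono hb (by omega) (by omega))⟩
        · rw [h] at hi
          refine ⟨le_trans (aN_mono ha (by omega) (by omega)) hi.1, ?_⟩
          have e : 1 + m = m + 1 := by omega
          rw [e] at hi
          exact hi.2
      · push_neg at hiM
        have hnem : aN a i.val ≤ aN b (1 + i.val) := le_trans hi.1 hi.2
        by_cases hlt : i.val < m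
        · refine Set.mem_iUnion.2 ⟨⟨i.val + 1, by omega⟩, ?_⟩
          set s : Fin (L - 1) := ⟨i.val + 1, by omega⟩ with hs
          have hsv : s.val = i.val + 1 := rfl
          have hs0 : s.val ≠ 0 := by omega
          have hj : jf s.val = i.val := by rw [hsv, hjf1 _ (by omega)]; omega
          have hjM : jf s.val + 1 ≠ m := by omega
          have hnem' : aN a (jf s.val) ≤ aN b (1 + jf s.val) := by rw [hj]; exact hnem
          rw [hxp s hs0 hjM hnem', hyp s hs0 hjM hnem', Cyc_Icc hnem', hj]
          exact Set.mem_Icc.2 hi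
        · refine Set.mem_iUnion.2 ⟨⟨i.val, by omega⟩, ?_⟩
          set s : Fin (L - 1) := ⟨i.val, by omega⟩ with hs
          have hsv : s.val = i.val := rfl
          have hs0 : s.val ≠ 0 := by omega
          have hj : jf s.val = i.val := by rw [hsv, hjf2 _ (by omega)]
          have hjM : jf s.val + 1 ≠ m := by omega
          have hnem' : aN a (jf s.val) ≤ aN b (1 + jf s.val) := by rw [hj]; exact hnem
          rw [hxp s hs0 hjM hnem', hyp s hs0 hjM hnem', Cyc_Icc hnem', hj]
          exact Set.mem_Icc.2 hi
  · refine Set.iUnion_subset fun s t ht => ?_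
    by_cases hs0 : s.val = 0
    · rw [hx0 _ hs0, hy0 _ hs0, Cyc_wrap hfull] at ht
      rcases ht with h | h
      · exact subL_wl ha hb haI hbI (by omega) h
      · exact subL_wr ha hb haI hbI (by omega) h
    · have hsL := s.isLt
      have hjlt : jf s.val < L - 1 := by
        by_cases h : s.val ≤ m
        · rw [hjf1 _ h]; omega
        · rw [hjf2 _ h]; omega
      by_cases hjM : jf s.val + 1 = m
      · rw [hxM s hs0 hjM, hyM s hs0 hjM, Cyc_Icc hM] at ht
        exact hMsub ht
      · by_cases hcond : aN a (jf s.val) ≤ aN b (1 + jf s.val)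
        · rw [hxp s hs0 hjM hcond, hyp s hs0 hjM hcond, Cyc_Icc hcond] at ht
          exact subL_mid ha hb haI hbI (by omega) hjlt ht
        · rw [hxn s hs0 hjM hcond, hyn s hs0 hjM hcond, Cyc_pt,
            Set.mem_singleton_iff] at ht
          subst ht
          exact subL_wr ha hb haI hbI (by omega) ⟨le_rfl, (aN_mem hbI (by omega)).1⟩

lemma claim3b (hL2 : 2 ≤ L) {t0 : ℝ} (ht0 : t0 ∈ AgeqPhi L a b (L + 1))
    (hA : ∀ k < L, ∀ x y : Fin k → ℝ,
      AgeqPhi L a b (L + 1) ≠ ⋃ i, CyclicInterval (x i) (y i)) :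
    ∀ m < L, aN a m ≤ aN b m := by
  intro m hm
  by_contra hab
  classical
  set jf : ℕ → ℕ := fun s => if s < m then s else s + 1 with hjf
  have hjf1 : ∀ s, s < m → jf s = s := fun s h => if_pos h
  have hjf2 : ∀ s, ¬ s < m → jf s = s + 1 := fun s h => if_neg h
  set x : Fin (L - 1) → ℝ := fun s =>
    if aN a (jf s.val) ≤ aN b (jf s.val) then aN a (jf s.val) else t0 with hx
  set y : Fin (L - 1) → ℝ := fun s =>
    if aN a (jf s.val) ≤ aN b (jf s.val) then aN b (jf s.val) else t0 with hy
  have hxp : ∀ s : Fin (L - 1), aN a (jf s.val) ≤ aN b (jf s.val) →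
      x s = aN a (jf s.val) := fun s h => by rw [hx]; exact if_pos h
  have hyp : ∀ s : Fin (L - 1), aN a (jf s.val) ≤ aN b (jf s.val) →
      y s = aN b (jf s.val) := fun s h => by rw [hy]; exact if_pos h
  have hxn : ∀ s : Fin (L - 1), ¬ aN a (jf s.val) ≤ aN b (jf s.val) →
      x s = t0 := fun s h => by rw [hx]; exact if_neg h
  have hyn : ∀ s : Fin (L - 1), ¬ aN a (jf s.val) ≤ aN b (jf s.val) →
      y s = t0 := fun s h => by rw [hy]; exact if_neg h
  refine hA (L - 1) (by omega) x y ?_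
  apply Set.Subset.antisymm
  · rw [decomp_L ha hb haI hbI (by omega)]
    refine Set.iUnion_subset fun i t hi => ?_
    have hiL := i.isLt
    rw [Set.mem_Icc] at hi
    have hnem : aN a i.val ≤ aN b i.val := le_trans hi.1 hi.2
    have hne : i.val ≠ m := fun h => hab (h ▸ hnem)
    by_cases hlt : i.val < m
    · refine Set.mem_iUnion.2 ⟨⟨i.val, by omega⟩, ?_⟩
      set s : Fin (L - 1) := ⟨i.val, by omega⟩ with hs
      have hj : jf s.val = i.val := hjf1 _ hlt
      have hnem' : aN a (jf s.val) ≤ aN b (jf s.val) := by rw [hj]; exact hnem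
      rw [hxp s hnem', hyp s hnem', Cyc_Icc hnem', hj]
      exact Set.mem_Icc.2 hi
    · refine Set.mem_iUnion.2 ⟨⟨i.val - 1, by omega⟩, ?_⟩
      set s : Fin (L - 1) := ⟨i.val - 1, by omega⟩ with hs
      have hsv : s.val = i.val - 1 := rfl
      have hj : jf s.val = i.val := by rw [hsv, hjf2 _ (by omega)]; omega
      have hnem' : aN a (jf s.val) ≤ aN b (jf s.val) := by rw [hj]; exact hnem
      rw [hxp s hnem', hyp s hnem', Cyc_Icc hnem', hj]
      exact Set.mem_Icc.2 hi
  · refine Set.iUnion_subset fun s t ht => ?_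
    have hsL := s.isLt
    have hjlt : jf s.val < L := by
      by_cases h : s.val < m
      · rw [hjf1 _ h]; omega
      · rw [hjf2 _ h]; omega
    by_cases hcond : aN a (jf s.val) ≤ aN b (jf s.val)
    · rw [hxp s hcond, hyp s hcond, Cyc_Icc hcond] at ht
      exact subL1 ha hb haI hbI (by omega) hjlt ht
    · rw [hxn s hcond, hyn s hcond, Cyc_pt, Set.mem_singleton_iff] at ht
      subst ht
      exact ht0

lemma claim3c (hL2 : 2 ≤ L) (h3b : ∀ j < L, aN a j ≤ aN b j)
    (hA : ∀ k < L, ∀ x y : Fin k → ℝ,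
      AgeqPhi L a b (L + 1) ≠ ⋃ i, CyclicInterval (x i) (y i)) :
    ∀ m, m + 1 < L → aN b m ≤ aN a (m + 1) := by
  intro m hm
  by_contra hab
  classical
  have hlt : aN a (m + 1) < aN b m := not_le.1 hab
  have hM : aN a m ≤ aN b (m + 1) :=
    le_trans (aN_mono ha (by omega) (by omega))
      (le_trans hlt.le (aN_mono hb (by omega) (by omega)))
  have hMsub : Set.Icc (aN a m) (aN b (m + 1)) ⊆ AgeqPhi L a b (L + 1) := by
    intro t ht
    rw [Set.mem_Icc] at ht
    by_cases h2 : t ≤ aN b m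
    · exact subL1 ha hb haI hbI (by omega) (by omega : m < L) ⟨ht.1, h2⟩
    · refine subL1 ha hb haI hbI (by omega) (by omega : m + 1 < L) ?_
      exact ⟨le_trans hlt.le (le_of_not_ge h2), ht.2⟩
  set jf : ℕ → ℕ := fun s => if s ≤ m then s else s + 1 with hjf
  have hjf1 : ∀ s, s ≤ m → jf s = s := fun s h => if_pos h
  have hjf2 : ∀ s, ¬ s ≤ m → jf s = s + 1 := fun s h => if_neg h
  set x : Fin (L - 1) → ℝ := fun s =>
    if jf s.val = m then aN a m else aN a (jf s.val) with hx
  set y : Fin (L - 1) → ℝ := fun s =>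
    if jf s.val = m then aN b (m + 1) else aN b (jf s.val) with hy
  have hxM : ∀ s : Fin (L - 1), jf s.val = m → x s = aN a m := fun s h => by
    rw [hx]; exact if_pos h
  have hyM : ∀ s : Fin (L - 1), jf s.val = m → y s = aN b (m + 1) := fun s h => by
    rw [hy]; exact if_pos h
  have hxp : ∀ s : Fin (L - 1), jf s.val ≠ m → x s = aN a (jf s.val) := fun s h => by
    rw [hx]; exact if_neg h
  have hyp : ∀ s : Fin (L - 1), jf s.val ≠ m → y s = aN b (jf s.val) := fun s h => by
    rw [hy]; exact if_neg h
  refine hA (L - 1) (by omega) x y ?_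
  apply Set.Subset.antisymm
  · rw [decomp_L ha hb haI hbI (by omega)]
    refine Set.iUnion_subset fun i t hi => ?_
    have hiL := i.isLt
    rw [Set.mem_Icc] at hi
    by_cases hiM : i.val = m ∨ i.val = m + 1
    · refine Set.mem_iUnion.2 ⟨⟨m, by omega⟩, ?_⟩
      set s : Fin (L - 1) := ⟨m, by omega⟩ with hs
      have hsv : s.val = m := rfl
      have hj : jf s.val = m := by rw [hsv, hjf1 _ le_rfl]
      rw [hxM s hj, hyM s hj, Cyc_Icc hM, Set.mem_Icc]
      rcases hiM with h | h
      · rw [h] at hi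
        exact ⟨hi.1, le_trans hi.2 (aN_mono hb (by omega) (by omega))⟩
      · rw [h] at hi
        exact ⟨le_trans (aN_mono ha (by omega) (by omega)) hi.1, hi.2⟩
    · push_neg at hiM
      by_cases hlt' : i.val < m
      · refine Set.mem_iUnion.2 ⟨⟨i.val, by omega⟩, ?_⟩
        set s : Fin (L - 1) := ⟨i.val, by omega⟩ with hs
        have hsv : s.val = i.val := rfl
        have hj : jf s.val = i.val := by rw [hsv, hjf1 _ (by omega)]
        have hjM : jf s.val ≠ m := by omega
        rw [hxp s hjM, hyp s hjM, Cyc_Icc (by rw [hj]; exact le_trans hi.1 hi.2), hj]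
        exact Set.mem_Icc.2 hi
      · refine Set.mem_iUnion.2 ⟨⟨i.val - 1, by omega⟩, ?_⟩
        set s : Fin (L - 1) := ⟨i.val - 1, by omega⟩ with hs
        have hsv : s.val = i.val - 1 := rfl
        have hj : jf s.val = i.val := by rw [hsv, hjf2 _ (by omega)]; omega
        have hjM : jf s.val ≠ m := by omega
        rw [hxp s hjM, hyp s hjM, Cyc_Icc (by rw [hj]; exact le_trans hi.1 hi.2), hj]
        exact Set.mem_Icc.2 hi
  · refine Set.iUnion_subset fun s t ht => ?_
    have hsL := s.isLt
    have hjlt : jf s.val < L := by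
      by_cases h : s.val ≤ m
      · rw [hjf1 _ h]; omega
      · rw [hjf2 _ h]; omega
    by_cases hjM : jf s.val = m
    · rw [hxM s hjM, hyM s hjM, Cyc_Icc hM] at ht
      exact hMsub ht
    · rw [hxp s hjM, hyp s hjM, Cyc_Icc (h3b _ hjlt)] at ht
      exact subL1 ha hb haI hbI (by omega) hjlt ht

end PartTwo

/-- Each `A_{≥n}` is a union of at most `L` cyclic intervals; moreover, if some
`A_{≥n}` cannot be written as a union of fewer than `L` cyclic intervals, then the
sequences `(a_l)` and `(b_l)` interlace. -/
theorem Ageq_union_of_cyclic_intervals (L : ℕ) (hL : 0 < L) (a b : Fin L → ℝ)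
    (ha : Monotone a) (hb : Monotone b)
    (haI : ∀ l, a l ∈ Set.Icc (0 : ℝ) 1) (hbI : ∀ l, b l ∈ Set.Icc (0 : ℝ) 1) :
    (∀ n, 1 ≤ n → n ≤ 2 * L → ∃ k ≤ L, ∃ x y : Fin k → ℝ,
        AgeqPhi L a b n = ⋃ i, CyclicInterval (x i) (y i)) ∧
    ((∃ n, 1 ≤ n ∧ n ≤ 2 * L ∧ ∀ k < L, ∀ x y : Fin k → ℝ,
        AgeqPhi L a b n ≠ ⋃ i, CyclicInterval (x i) (y i)) →
      InterlaceLe L a b ∨ InterlaceLe L b a) := by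
  constructor
  · intro n hn1 hn2
    by_cases hnL : n ≤ L
    · by_cases hfull : aN a (n - 1) ≤ aN b (L - n)
      · exact ⟨1, hL, fun _ => 0, fun _ => 1, P_full ha hb haI hbI hn1 hnL hfull⟩
      · obtain ⟨x, y, h⟩ := P_le ha hb haI hbI hn1 hnL hfull
        exact ⟨n, hnL, x, y, h⟩
    · obtain ⟨k, hk, x, y, h⟩ := P_gt ha hb haI hbI (by omega) hn2
      exact ⟨k, by omega, x, y, h⟩
  · rintro ⟨n, hn1, hn2, hA⟩
    by_cases hL2 : 2 ≤ L
    · by_cases hnle : n ≤ L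
      · by_cases hfull : aN a (n - 1) ≤ aN b (L - n)
        · exact absurd (P_full ha hb haI hbI hn1 hnle hfull) (hA 1 (by omega) _ _)
        · by_cases hnL : n = L
          · subst hnL
            have hfull0 : ¬ aN a (n - 1) ≤ aN b 0 := by rwa [Nat.sub_self] at hfull
            right
            have h2a := claim2a ha hb haI hbI hL2 hfull0 hA
            have h2b : ∀ m < n, aN b m ≤ aN a m := by
              intro m hm
              by_contra hcon
              have hab : aN a m ≤ aN b m := (not_le.1 hcon).le
              by_cases hm0 : m = 0
              · exact claim2b0 ha hb haI hbI hL2 hA (hm0 ▸ hab)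
              · by_cases hmL : m = n - 1
                · exact claim2bL ha hb haI hbI hL2 hA (hmL ▸ hab)
                · exact claim2bmid ha hb haI hbI hfull0 hA (by omega) (by omega) hab
            refine ⟨fun i => ?_, fun i hi => ?_⟩
            · have := h2b i.val i.isLt
              rwa [aN_app, aN_app] at this
            · have := h2a i.val hi
              rwa [aN_app, aN_eq hi] at this
          · obtain ⟨x, y, h⟩ := P_le ha hb haI hbI hn1 hnle hfull
            exact absurd h (hA n (by omega) x y)
      · by_cases hnL1 : n = L + 1
        · subst hnL1
          left
          by_cases hAe : AgeqPhi L a b (L + 1) = ∅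
          · exfalso
            refine hA 0 (by omega) (fun _ => 0) (fun _ => 0) ?_
            rw [hAe]
            exact (Set.iUnion_of_empty _).symm
          · obtain ⟨t0, ht0⟩ := Set.nonempty_iff_ne_empty.2 hAe
            have h3b := claim3b ha hb haI hbI hL2 ht0 hA
            have h3c := claim3c ha hb haI hbI hL2 h3b hA
            refine ⟨fun i => ?_, fun i hi => ?_⟩
            · have := h3b i.val i.isLt
              rwa [aN_app, aN_app] at this
            · have := h3c i.val hi
              rwa [aN_app, aN_eq hi] at this
        · obtain ⟨k, hk, x, y, h⟩ := P_gt ha hb haI hbI (by omega) hn2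
          exact absurd h (hA k (by omega) x y)
    · have hL1 : L = 1 := by omega
      subst hL1
      rcases le_total (a 0) (b 0) with h | h
      · left
        refine ⟨fun i => ?_, fun i hi => absurd hi (by omega)⟩
        have hi0 : i = 0 := Subsingleton.elim _ _
        rw [hi0]; exact h
      · right
        refine ⟨fun i => ?_, fun i hi => absurd hi (by omega)⟩
        have hi0 : i = 0 := Subsingleton.elim _ _
        rw [hi0]; exact h
end

section
/- Let a_1,…,a_L, b_1,…,b_L ∈ ℝ and N ∈ ℕ be such that the fractional parts {Na_j} and {Nb_j} interlace cyclically on ℝ/ℤ. Then |Σ_{j=1}^L e^{2πiNa_j} − Σ_{j=1}^L e^{2πiNb_j}|² ≤ 4. -/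
/-- The `2L` points with fractional parts of `u i` and `v i` interlace cyclically on
`ℝ/ℤ`: after a common rotation by `x`, they can be ordered
`{u_{σ(1)}+x} ≤ {v_{τ(1)}+x} ≤ {u_{σ(2)}+x} ≤ … ≤ {v_{τ(L)}+x}`. -/
def InterlaceFract (L : ℕ) (u v : Fin L → ℝ) : Prop :=
  ∃ σ τ : Equiv.Perm (Fin L), ∃ x : ℝ,
    (∀ i : Fin L, Int.fract (u (σ i) + x) ≤ Int.fract (v (τ i) + x)) ∧
    (∀ i : Fin L, ∀ h : i.val + 1 < L,
      Int.fract (v (τ i) + x) ≤ Int.fract (u (σ ⟨i.val + 1, h⟩) + x))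

open scoped Real

open intervalIntegral

noncomputable def sinp : ℝ → ℝ := fun v => max (Real.sin v) 0

lemma sinp_cont : Continuous sinp := Real.continuous_sin.max continuous_const

lemma sinp_periodic : Function.Periodic sinp (2 * π) := fun x => by
  simp [sinp, Real.sin_periodic x]

lemma sinp_integral : ∫ v in (0:ℝ)..(2*π), sinp v = 2 := by
  have h1 : ∫ v in (0:ℝ)..π, sinp v = 2 := by
    rw [intervalIntegral.integral_congr (g := Real.sin) ?_, integral_sin]
    · norm_num
    · intro x hx
      rw [Set.uIcc_of_le Real.pi_nonneg] at hx
      exact max_eq_left (Real.sin_nonneg_of_nonneg_of_le_pi hx.1 hx.2)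
  have h2 : ∫ v in π..(2*π), sinp v = 0 := by
    rw [intervalIntegral.integral_congr (g := fun _ => (0:ℝ)) ?_]
    · simp
    · intro x hx
      rw [Set.uIcc_of_le (by linarith [Real.pi_nonneg])] at hx
      have : Real.sin x ≤ 0 := by
        have := Real.sin_nonneg_of_nonneg_of_le_pi (x := x - π) (by linarith [hx.1]) (by linarith [hx.2])
        rw [Real.sin_sub_pi] at this; linarith
      exact max_eq_right this
  have := intervalIntegral.integral_add_adjacent_intervals (μ := MeasureTheory.volume)
    (a := (0:ℝ)) (b := π) (c := 2*π)
    (sinp_cont.intervalIntegrable _ _) (sinp_cont.intervalIntegrable _ _)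
  rw [← this, h1, h2]; ring

noncomputable def gg (φ : ℝ) : ℝ → ℝ := fun u => (2*π) * sinp (2*π*u + φ)

lemma gg_cont (φ : ℝ) : Continuous (gg φ) := by
  exact continuous_const.mul (sinp_cont.comp (by continuity))

lemma gg_nonneg (φ : ℝ) (u : ℝ) : 0 ≤ gg φ u :=
  mul_nonneg (by positivity) (le_max_right _ _)

noncomputable def VV (φ : ℝ) : ℝ → ℝ := fun θ => ∫ u in (0:ℝ)..θ, gg φ u

lemma VV_sub (φ t s : ℝ) : VV φ s - VV φ t = ∫ u in t..s, gg φ u := by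
  have := intervalIntegral.integral_add_adjacent_intervals (μ := MeasureTheory.volume) (a := (0:ℝ)) (b := t) (c := s)
    ((gg_cont φ).intervalIntegrable _ _) ((gg_cont φ).intervalIntegrable _ _)
  unfold VV; rw [← this]; ring

lemma VV_mono (φ : ℝ) : Monotone (VV φ) := by
  intro x y hxy
  have h : 0 ≤ VV φ y - VV φ x := by
    rw [VV_sub]
    exact intervalIntegral.integral_nonneg hxy (fun u _ => gg_nonneg φ u)
  linarith

lemma VV_step (φ t s : ℝ) (h : t ≤ s) :
    Real.cos (2*π*t + φ) - Real.cos (2*π*s + φ) ≤ VV φ s - VV φ t := by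
  rw [VV_sub]
  have hint : ∫ u in t..s, (2*π) * Real.sin (2*π*u + φ)
      = Real.cos (2*π*t + φ) - Real.cos (2*π*s + φ) := by
    rw [intervalIntegral.integral_const_mul,
      intervalIntegral.integral_comp_mul_add Real.sin (by positivity : (2*π) ≠ 0) φ,
      integral_sin, smul_eq_mul]
    field_simp
  rw [← hint]
  apply intervalIntegral.integral_mono_on h
  · exact (continuous_const.mul (Real.continuous_sin.comp (by continuity))).intervalIntegrable _ _
  · exact (gg_cont φ).intervalIntegrable _ _
  · intro x _
    exact mul_le_mul_of_nonneg_left (le_max_left _ _) (by positivity)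

lemma VV_total (φ : ℝ) : VV φ 1 - VV φ 0 = 2 := by
  rw [VV_sub]
  unfold gg
  rw [intervalIntegral.integral_const_mul,
    intervalIntegral.integral_comp_mul_add sinp (by positivity : (2*π) ≠ 0) φ, smul_eq_mul]
  have : ∫ v in (2*π*0 + φ)..(2*π*1 + φ), sinp v = 2 := by
    have := sinp_periodic.intervalIntegral_add_eq φ 0
    simp only [zero_add] at this
    rw [mul_zero, zero_add, mul_one, add_comm (2*π) φ, this, sinp_integral]
  rw [this]
  field_simp

lemma chain_sum (V : ℝ → ℝ) (hV : Monotone V) :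
    ∀ (L : ℕ), 0 < L → ∀ (t s : ℕ → ℝ), (∀ i, i + 1 < L → s i ≤ t (i+1)) →
    ∑ j ∈ Finset.range L, (V (s j) - V (t j)) ≤ V (s (L-1)) - V (t 0) := by
  intro L
  induction L with
  | zero => intro h; exact absurd h (by simp)
  | succ n ih =>
    intro _ t s h2
    rcases Nat.eq_zero_or_pos n with rfl | hn
    · simp
    · rw [Finset.sum_range_succ]
      have h2' : ∀ i, i + 1 < n → s i ≤ t (i+1) := fun i hi => h2 i (by omega)
      have hmain := ih hn t s h2'
      have hlink : V (s (n-1)) ≤ V (t n) := by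
        have := h2 (n-1) (by omega)
        rw [Nat.sub_add_cancel hn] at this
        exact hV this
      have : n + 1 - 1 = n := rfl
      rw [this]
      linarith

lemma core (L : ℕ) (φ : ℝ) (t s : Fin L → ℝ)
    (ht0 : ∀ j, 0 ≤ t j) (hs1 : ∀ j, s j ≤ 1)
    (h1 : ∀ j, t j ≤ s j) (h2 : ∀ j : Fin L, ∀ h : j.val + 1 < L, s j ≤ t ⟨j.val+1, h⟩) :
    ∑ j, (Real.cos (2*π * t j + φ) - Real.cos (2*π * s j + φ)) ≤ 2 := by
  rcases Nat.eq_zero_or_pos L with rfl | hL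
  · simp
  set t' : ℕ → ℝ := fun n => if h : n < L then t ⟨n, h⟩ else 0 with ht'
  set s' : ℕ → ℝ := fun n => if h : n < L then s ⟨n, h⟩ else 1 with hs'
  have hsum : ∑ j, (Real.cos (2*π * t j + φ) - Real.cos (2*π * s j + φ))
      = ∑ j ∈ Finset.range L, (Real.cos (2*π * t' j + φ) - Real.cos (2*π * s' j + φ)) := by
    rw [← Fin.sum_univ_eq_sum_range]
    apply Finset.sum_congr rfl
    intro j _
    simp [ht', hs', j.isLt]
  rw [hsum]
  have step1 : ∑ j ∈ Finset.range L, (Real.cos (2*π * t' j + φ) - Real.cos (2*π * s' j + φ))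
      ≤ ∑ j ∈ Finset.range L, (VV φ (s' j) - VV φ (t' j)) := by
    apply Finset.sum_le_sum
    intro j hj
    rw [Finset.mem_range] at hj
    apply VV_step
    simp only [ht', hs', dif_pos hj]
    exact h1 _
  have step2 : ∑ j ∈ Finset.range L, (VV φ (s' j) - VV φ (t' j))
      ≤ VV φ (s' (L-1)) - VV φ (t' 0) := by
    apply chain_sum (VV φ) (VV_mono φ) L hL
    intro i hi
    have hiL : i < L := by omega
    simp only [ht', hs', dif_pos hiL, dif_pos hi]
    exact h2 ⟨i, hiL⟩ hi
  have step3 : VV φ (s' (L-1)) - VV φ (t' 0) ≤ VV φ 1 - VV φ 0 := by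
    have hA : VV φ (s' (L-1)) ≤ VV φ 1 := by
      apply VV_mono
      simp only [hs', dif_pos (Nat.sub_lt hL one_pos)]
      exact hs1 _
    have hB : VV φ 0 ≤ VV φ (t' 0) := by
      apply VV_mono
      simp only [ht', dif_pos hL]
      exact ht0 _
    linarith
  have := VV_total φ
  linarith


/-- If the fractional parts `{Na_j}` and `{Nb_j}` interlace cyclically, then
`|Σ_j e^{2πiNa_j} − Σ_j e^{2πiNb_j}|² ≤ 4`. -/
theorem interlace_implies_sN_le_four (L : ℕ) (a b : Fin L → ℝ) (N : ℕ)
    (hinter : InterlaceFract L (fun i => (N : ℝ) * a i) (fun i => (N : ℝ) * b i)) :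
    ‖(∑ j, Complex.exp (2 * π * Complex.I * (N : ℝ) * a j)) -
        ∑ j, Complex.exp (2 * π * Complex.I * (N : ℝ) * b j)‖ ^ 2 ≤ 4 := by
  obtain ⟨σ, τ, x, hts, hst⟩ := hinter
  set A : ℂ := ∑ j, Complex.exp (2 * π * Complex.I * (N : ℝ) * a j) with hA
  set B : ℂ := ∑ j, Complex.exp (2 * π * Complex.I * (N : ℝ) * b j) with hB
  set α : ℂ := A - B with hαdef
  suffices h : ‖α‖ ≤ 2 by
    calc ‖α‖ ^ 2 ≤ 2 ^ 2 := pow_le_pow_left₀ (norm_nonneg _) h 2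
      _ = 4 := by norm_num
  set ψ : ℝ := α.arg with hψ
  set φ : ℝ := -ψ - 2*π*x with hφ
  -- ‖α‖ as a real part
  have hα : Complex.exp (-(ψ:ℂ) * Complex.I) * α = (‖α‖ : ℂ) := by
    have h1 := Complex.norm_mul_exp_arg_mul_I α
    rw [← hψ] at h1
    calc Complex.exp (-(ψ:ℂ) * Complex.I) * α
        = Complex.exp (-(ψ:ℂ) * Complex.I) * ((‖α‖ : ℂ) * Complex.exp ((ψ:ℂ) * Complex.I)) := by
          rw [h1]
      _ = (‖α‖ : ℂ) * Complex.exp (-(ψ:ℂ) * Complex.I + (ψ:ℂ) * Complex.I) := by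
          rw [Complex.exp_add]; ring
      _ = (‖α‖ : ℂ) := by
          have hz : -(ψ:ℂ) * Complex.I + (ψ:ℂ) * Complex.I = 0 := by ring
          rw [hz, Complex.exp_zero, mul_one]
  have hnorm : ‖α‖ = (Complex.exp (-(ψ:ℂ) * Complex.I) * α).re := by
    rw [hα, Complex.ofReal_re]
  -- term computation
  have hterm : ∀ y : ℝ, (Complex.exp (-(ψ:ℂ) * Complex.I) *
      Complex.exp (2 * π * Complex.I * (N:ℝ) * y)).re
      = Real.cos (2*π * Int.fract ((N:ℝ)*y + x) + φ) := by
    intro y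
    have h1 : Complex.exp (-(ψ:ℂ) * Complex.I) * Complex.exp (2 * π * Complex.I * (N:ℝ) * y)
        = Complex.exp (((2*π*((N:ℝ)*y) - ψ : ℝ) : ℂ) * Complex.I) := by
      rw [← Complex.exp_add]
      congr 1
      push_cast
      ring
    rw [h1, Complex.exp_ofReal_mul_I_re]
    have hf : Int.fract ((N:ℝ)*y + x) = (N:ℝ)*y + x - (⌊(N:ℝ)*y + x⌋ : ℝ) := by
      rw [Int.fract]
    have h2 : 2*π*((N:ℝ)*y) - ψ
        = (2*π * Int.fract ((N:ℝ)*y + x) + φ) + (⌊(N:ℝ)*y + x⌋ : ℝ) * (2*π) := by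
      rw [hf, hφ]; ring
    rw [h2, Real.cos_add_int_mul_two_pi]
  -- expand the real part as sums of cosines
  have hre : (Complex.exp (-(ψ:ℂ) * Complex.I) * α).re
      = ∑ j, (Real.cos (2*π * Int.fract ((N:ℝ)*a (σ j) + x) + φ)
          - Real.cos (2*π * Int.fract ((N:ℝ)*b (τ j) + x) + φ)) := by
    rw [hαdef, mul_sub, Complex.sub_re, hA, hB, Finset.mul_sum, Finset.mul_sum,
      Complex.re_sum, Complex.re_sum]
    simp only [hterm]
    rw [← Equiv.sum_comp σ (fun j => Real.cos (2*π * Int.fract ((N:ℝ)*a j + x) + φ)),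
      ← Equiv.sum_comp τ (fun j => Real.cos (2*π * Int.fract ((N:ℝ)*b j + x) + φ)),
      ← Finset.sum_sub_distrib]
  rw [hnorm, hre]
  exact core L φ (fun j => Int.fract ((N:ℝ)*a (σ j) + x)) (fun j => Int.fract ((N:ℝ)*b (τ j) + x))
    (fun j => Int.fract_nonneg _) (fun j => (Int.fract_lt_one _).le)
    (fun j => hts j) (fun j h => hst j h)
end
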